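/- arXiv:1702.05787 — 6 statements merged into one kernel-verified Lean document; each statement's English description precedes it below -/
import Mathlib

section
/- Let U be a unit interval order and let (w_1, ..., w_k) be a sequence of elements of U satisfying w_i ⊁ w_{i+1} for all i. Then the sequence is correct if and only if for each j with 1 ≤ j ≤ k, the subset {w_1, ..., w_j} is connected in the incomparability graph (U, ∼). -/
/-- The incomparability graph of `ℝ` viewed as a unit interval order
(`u ≻ w ↔ u ≥ w + 1`): two distinct reals are adjacent iff `|x - y| < 1`. -/
def IncG : SimpleGraph ℝ := SimpleGraph.fromRel (fun x y => |x - y| < 1)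

lemma incg_adj {x y : ℝ} (hne : x ≠ y) (h : |x - y| < 1) : IncG.Adj x y := by
  rw [IncG, SimpleGraph.fromRel_adj]
  exact ⟨hne, Or.inl h⟩

lemma incg_adj_abs {x y : ℝ} (h : IncG.Adj x y) : |x - y| < 1 := by
  rw [IncG, SimpleGraph.fromRel_adj] at h
  rcases h.2 with h' | h'
  · exact h'
  · rwa [abs_sub_comm]

lemma walk_cross {S : Set ℝ} {t : ℝ} : ∀ {a b : S}, (IncG.induce S).Walk a b →
    a.1 ≤ t - 1 → t + 1 ≤ b.1 → ∃ x ∈ S, |x - t| < 1 := by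
  intro a b p
  induction p with
  | nil => intro h1 h2; exact absurd h2 (not_le.mpr (by linarith))
  | @cons u v b h q ih =>
    intro h1 h2
    by_cases hv : |v.1 - t| < 1
    · exact ⟨v.1, v.2, hv⟩
    · have habs : |u.1 - v.1| < 1 := incg_adj_abs h
      have habs' := abs_sub_lt_iff.mp habs
      rcases le_abs.mp (not_lt.mp hv) with hc | hc
      · exact absurd hc (not_le.mpr (by linarith [habs'.2]))
      · exact ih (by linarith) h2

lemma reach_mono {S T : Set ℝ} (hST : S ⊆ T) {a b : S}
    (h : (IncG.induce S).Reachable a b) :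
    (IncG.induce T).Reachable ⟨a.1, hST a.2⟩ ⟨b.1, hST b.2⟩ :=
  h.map ⟨Set.inclusion hST, fun hadj => hadj⟩

lemma exists_adj_of_walk {V : Type*} {G : SimpleGraph V} :
    ∀ {a b : V}, G.Walk a b → a ≠ b → ∃ c, G.Adj a c := by
  intro a b p
  cases p with
  | nil => intro h; exact absurd rfl h
  | cons h q => intro _; exact ⟨_, h⟩

lemma forward_aux (k : ℕ) (w : Fin k → ℝ)
    (hstep : ∀ i : ℕ, (h : i + 1 < k) → ¬ (w ⟨i + 1, h⟩ + 1 ≤ w ⟨i, Nat.lt_of_succ_lt h⟩))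
    (hcor : ∀ j : Fin k, 0 < j.1 → ∃ i : Fin k, i < j ∧ ¬ (w i + 1 ≤ w j)) :
    ∀ m : ℕ, ∀ j : Fin k, j.1 = m →
      (IncG.induce {x : ℝ | ∃ i : Fin k, i ≤ j ∧ w i = x}).Connected := by
  intro m
  induction m with
  | zero =>
    intro j hj
    have hset : {x : ℝ | ∃ i : Fin k, i ≤ j ∧ w i = x} = {w j} := by
      ext x
      simp only [Set.mem_setOf_eq, Set.mem_singleton_iff]
      constructor
      · rintro ⟨i, hi, rfl⟩
        have : i = j := Fin.ext (by have := Fin.le_def.mp hi; omega)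
        rw [this]
      · rintro rfl; exact ⟨j, le_refl _, rfl⟩
    rw [hset]
    rw [SimpleGraph.connected_iff]
    refine ⟨fun u v => ?_, ⟨⟨w j, rfl⟩⟩⟩
    have : u = v := Subtype.ext (u.2.trans v.2.symm)
    rw [this]
  | succ m ih =>
    intro j hj
    have hm : m < k := by omega
    set j' : Fin k := ⟨m, hm⟩ with hj'
    have hconn' := ih j' rfl
    have hj'j : j' ≤ j := Fin.le_def.mpr (by simp [hj'] ; omega)
    have hsub : {x : ℝ | ∃ i : Fin k, i ≤ j' ∧ w i = x} ⊆
        {x : ℝ | ∃ i : Fin k, i ≤ j ∧ w i = x} := by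
      rintro x ⟨i, hi, he⟩
      exact ⟨i, le_trans hi hj'j, he⟩
    have hsplit : ∀ x ∈ {x : ℝ | ∃ i : Fin k, i ≤ j ∧ w i = x},
        x ∈ {x : ℝ | ∃ i : Fin k, i ≤ j' ∧ w i = x} ∨ x = w j := by
      rintro x ⟨i, hi, rfl⟩
      have hi' := Fin.le_def.mp hi
      rcases Nat.lt_or_ge i.1 (m+1) with h' | h'
      · exact Or.inl ⟨i, Fin.le_def.mpr (by simp [hj']; omega), rfl⟩
      · have : i = j := Fin.ext (by omega)
        exact Or.inr (by rw [this])
    by_cases hwj : w j ∈ {x : ℝ | ∃ i : Fin k, i ≤ j' ∧ w i = x}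
    · have hseteq : {x : ℝ | ∃ i : Fin k, i ≤ j ∧ w i = x} =
          {x : ℝ | ∃ i : Fin k, i ≤ j' ∧ w i = x} := by
        apply Set.Subset.antisymm _ hsub
        intro x hx
        rcases hsplit x hx with h' | h'
        · exact h'
        · rw [h']; exact hwj
      rw [hseteq]; exact hconn'
    · -- find x₀ ∈ S' with |x₀ - w j| < 1
      obtain ⟨i, hij, hile⟩ := hcor j (by omega)
      have hwij : w j < w i + 1 := by linarith [not_le.mp hile]
      have hiS' : w i ∈ {x : ℝ | ∃ i : Fin k, i ≤ j' ∧ w i = x} := by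
        refine ⟨i, Fin.le_def.mpr ?_, rfl⟩
        have h2 := Fin.lt_def.mp hij
        show i.1 ≤ m
        omega
      have hj'S' : w j' ∈ {x : ℝ | ∃ i : Fin k, i ≤ j' ∧ w i = x} :=
        ⟨j', le_refl _, rfl⟩
      have hstepj : w j' < w j + 1 := by
        have h1 := hstep m (by omega)
        have hje : (⟨m + 1, by omega⟩ : Fin k) = j := Fin.ext (by simp only [Fin.val_mk]; exact hj.symm)
        rw [hje] at h1
        linarith [not_le.mp h1]
      have hx0 : ∃ x₀ ∈ {x : ℝ | ∃ i : Fin k, i ≤ j' ∧ w i = x}, |x₀ - w j| < 1 := by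
        by_cases hi1 : |w i - w j| < 1
        · exact ⟨w i, hiS', hi1⟩
        · have hige : w j + 1 ≤ w i := by
            rcases le_abs.mp (not_lt.mp hi1) with hc | hc
            · linarith
            · linarith
          by_cases hj1 : |w j' - w j| < 1
          · exact ⟨w j', hj'S', hj1⟩
          · have hjle : w j' ≤ w j - 1 := by
              rcases le_abs.mp (not_lt.mp hj1) with hc | hc
              · linarith
              · linarith
            obtain ⟨p⟩ := hconn'.preconnected ⟨w j', hj'S'⟩ ⟨w i, hiS'⟩
            exact walk_cross p hjle hige
      obtain ⟨x₀, hx₀S', hx₀abs⟩ := hx0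
      have hx₀S : x₀ ∈ {x : ℝ | ∃ i : Fin k, i ≤ j ∧ w i = x} := hsub hx₀S'
      rw [SimpleGraph.connected_iff]
      constructor
      · have key : ∀ u : {x : ℝ | ∃ i : Fin k, i ≤ j ∧ w i = x},
            (IncG.induce {x : ℝ | ∃ i : Fin k, i ≤ j ∧ w i = x}).Reachable u ⟨x₀, hx₀S⟩ := by
          intro u
          rcases hsplit u.1 u.2 with h' | h'
          · have hr := hconn'.preconnected ⟨u.1, h'⟩ ⟨x₀, hx₀S'⟩
            have hr' := reach_mono hsub hr
            have : (⟨(⟨u.1, h'⟩ : {x : ℝ | ∃ i : Fin k, i ≤ j' ∧ w i = x}).1, hsub (⟨u.1, h'⟩ :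
                {x : ℝ | ∃ i : Fin k, i ≤ j' ∧ w i = x}).2⟩ :
                {x : ℝ | ∃ i : Fin k, i ≤ j ∧ w i = x}) = u := Subtype.ext rfl
            rwa [this] at hr'
          · have hne : u.1 ≠ x₀ := by
              rw [h']; intro he; exact hwj (he ▸ hx₀S')
            have hadj : (IncG.induce {x : ℝ | ∃ i : Fin k, i ≤ j ∧ w i = x}).Adj u ⟨x₀, hx₀S⟩ := by
              show IncG.Adj u.1 x₀
              apply incg_adj hne
              rw [h', abs_sub_comm]
              exact hx₀abs
            exact hadj.reachable
        intro u v
        exact (key u).trans (key v).symm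
      · exact ⟨⟨w j, ⟨j, le_refl _, rfl⟩⟩⟩

/-- let `U` be a unit interval order (a finite subset of `ℝ` with
`u ≻ w ↔ u ≥ w + 1`) and `(w_1, ..., w_k)` a sequence of elements of `U` with
`w_i ⊁ w_{i+1}` for all `i`. Then the sequence is correct iff for each
`j`, `1 ≤ j ≤ k`, the subset `{w_1, ..., w_j}` is connected in the
incomparability graph. -/
theorem stmt2 (U : Finset ℝ) (k : ℕ) (hk : 0 < k) (w : Fin k → ℝ)
    (hw : ∀ i, w i ∈ U)
    (hstep : ∀ i : ℕ, (h : i + 1 < k) → ¬ (w ⟨i + 1, h⟩ + 1 ≤ w ⟨i, by omega⟩)) :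
    (∀ j : Fin k, 0 < j.1 → ∃ i : Fin k, i < j ∧ ¬ (w i + 1 ≤ w j)) ↔
    (∀ j : Fin k, (IncG.induce {x : ℝ | ∃ i : Fin k, i ≤ j ∧ w i = x}).Connected) := by
  constructor
  · intro hcor j
    exact forward_aux k w hstep hcor j.1 j rfl
  · intro hconn j hj
    by_contra hno
    push_neg at hno
    have h0 : (⟨0, hk⟩ : Fin k) < j := by rw [Fin.lt_def]; simpa using hj
    have hW0 : w ⟨0, hk⟩ + 1 ≤ w j := hno _ h0
    have hjS : w j ∈ {x : ℝ | ∃ i : Fin k, i ≤ j ∧ w i = x} := ⟨j, le_refl _, rfl⟩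
    have h0S : w ⟨0, hk⟩ ∈ {x : ℝ | ∃ i : Fin k, i ≤ j ∧ w i = x} :=
      ⟨⟨0, hk⟩, le_of_lt h0, rfl⟩
    obtain ⟨p⟩ := (hconn j).preconnected ⟨w j, hjS⟩ ⟨w ⟨0, hk⟩, h0S⟩
    have hne : (⟨w j, hjS⟩ : {x : ℝ | ∃ i : Fin k, i ≤ j ∧ w i = x}) ≠ ⟨w ⟨0, hk⟩, h0S⟩ := by
      intro he
      have := Subtype.ext_iff.mp he
      simp only at this
      linarith
    obtain ⟨c, hadj⟩ := exists_adj_of_walk p hne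
    have hadj' : IncG.Adj (w j) c.1 := hadj
    have habs := incg_adj_abs hadj'
    have hcne : (w j : ℝ) ≠ c.1 := hadj'.ne
    obtain ⟨i, hi, hci⟩ := c.2
    rcases lt_or_eq_of_le hi with h' | h'
    · have h1 := hno i h'
      rw [hci] at h1
      have h2 := abs_sub_lt_iff.mp habs
      linarith [h2.1, h2.2]
    · rw [h'] at hci
      exact hcne hci
end

section
/- A finite poset realized as a finite subset U ⊂ ℝ with order u ≻ w iff u ≥ w + 1 is both (2+2)-free and (3+1)-free. -/
/-- a finite subset `U ⊂ ℝ` with the order `u ≻ w ↔ u ≥ w + 1`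
(elements `x, y` being incomparable iff `|x - y| < 1`) is both `(2+2)`-free and
`(3+1)`-free. -/
theorem stmt3 (U : Finset ℝ) :
    (¬ ∃ a₁ ∈ U, ∃ a₂ ∈ U, ∃ b₁ ∈ U, ∃ b₂ ∈ U,
        a₁ + 1 ≤ a₂ ∧ b₁ + 1 ≤ b₂ ∧
        |a₁ - b₁| < 1 ∧ |a₁ - b₂| < 1 ∧ |a₂ - b₁| < 1 ∧ |a₂ - b₂| < 1) ∧
    (¬ ∃ a₁ ∈ U, ∃ a₂ ∈ U, ∃ a₃ ∈ U, ∃ b ∈ U,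
        a₁ + 1 ≤ a₂ ∧ a₂ + 1 ≤ a₃ ∧
        |a₁ - b| < 1 ∧ |a₂ - b| < 1 ∧ |a₃ - b| < 1) := by
  constructor
  · rintro ⟨a₁, -, a₂, -, b₁, -, b₂, -, h1, h2, h3, h4, h5, h6⟩
    rw [abs_lt] at h3 h4 h5 h6
    linarith
  · rintro ⟨a₁, -, a₂, -, a₃, -, b, -, h1, h2, h3, h4, h5⟩
    rw [abs_lt] at h3 h4 h5
    linarith
end

section
/- In the grid graph Γ_G associated to a unit interval order U with n elements, for positive integers i and j, the sum of weights e((i,1), (i+j, n+1)) over all directed paths from vertex (i,1) to vertex (i+j, n+1) equals the elementary G-symmetric polynomial e_j^G, where G = inc(U). -/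
open scoped Classical

/-- For a unit interval order given by `v 0 < v 1 < ⋯ < v (n-1)` (0-based
indices), `nxt n v i` is the least index `j < n` with `v j ≻ v i`
(i.e. `v i + 1 ≤ v j`), or `n` if there is no such index.  (This is the
paper's `next`, with all indices shifted down by 1.) -/
noncomputable def nxt (n : ℕ) (v : ℕ → ℝ) (i : ℕ) : ℕ :=
  sInf {j : ℕ | (j < n ∧ v i + 1 ≤ v j) ∨ j = n}

/-- The generating function of directed paths in the grid `Γ_G` of a unit
interval order, computed by the transfer recursion: from a vertex `(i, j)` with
`j < n` there is an edge of weight `1` to `(i, j+1)` and an edge of weight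
`v_j` (the variable `X j`) to `(i+1, nxt j)`.  `pathSum n v f a b` is the sum
of the weights of all directed paths from `a` to `b` using at most `f` steps
(rows are 0-based: row `n` here corresponds to row `n+1` of the paper). -/
noncomputable def pathSum (n : ℕ) (v : ℕ → ℝ) : ℕ → ℕ × ℕ → ℕ × ℕ → MvPolynomial ℕ ℤ
  | 0, a, b => if a = b then 1 else 0
  | (f + 1), a, b =>
    if a = b then 1
    else if a.2 < n then
      pathSum n v f (a.1, a.2 + 1) b +
        MvPolynomial.X a.2 * pathSum n v f (a.1 + 1, nxt n v a.2) b
    else 0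

/-- The `m`-th elementary `G`-symmetric polynomial for `G = inc(U)`,
`U = {v 0, ..., v (n-1)}`: the sum over `m`-element stable sets of the
incomparability graph (i.e. sets of indices whose values are pairwise at
distance `≥ 1`, i.e. chains of `U`) of the products of the corresponding
variables. -/
noncomputable def eGU (n : ℕ) (v : ℕ → ℝ) (m : ℕ) : MvPolynomial ℕ ℤ :=
  ∑ S ∈ ((Finset.range n).powersetCard m).filter
      (fun S => ∀ a ∈ S, ∀ b ∈ S, a ≠ b → 1 ≤ |v a - v b|),
    ∏ i ∈ S, MvPolynomial.X i

lemma nxt_mem (n : ℕ) (v : ℕ → ℝ) (i : ℕ) :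
    (nxt n v i < n ∧ v i + 1 ≤ v (nxt n v i)) ∨ nxt n v i = n := by
  have h : nxt n v i ∈ {j : ℕ | (j < n ∧ v i + 1 ≤ v j) ∨ j = n} := by
    unfold nxt
    exact Nat.sInf_mem ⟨n, Or.inr rfl⟩
  exact h

lemma nxt_le (n : ℕ) (v : ℕ → ℝ) (i : ℕ) : nxt n v i ≤ n := by
  unfold nxt
  exact Nat.sInf_le (Or.inr rfl)

lemma lt_nxt (n : ℕ) (v : ℕ → ℝ)
    (hv : ∀ a b : ℕ, a < b → b < n → v a < v b) (i : ℕ) (hi : i < n) :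
    i < nxt n v i := by
  rcases nxt_mem n v i with ⟨h1, h2⟩ | h1
  · by_contra h
    push_neg at h
    rcases lt_or_eq_of_le h with h' | h'
    · have := hv _ _ h' hi
      linarith
    · rw [h'] at h2; linarith
  · omega

lemma nxt_le_of (n : ℕ) (v : ℕ → ℝ) (i b : ℕ) (hb : b < n)
    (h : v i + 1 ≤ v b) : nxt n v i ≤ b := by
  unfold nxt
  exact Nat.sInf_le (Or.inl ⟨hb, h⟩)

lemma pathSum_zero_of_row_lt (n : ℕ) (v : ℕ → ℝ) :
    ∀ (f : ℕ) (a b : ℕ × ℕ), b.1 < a.1 → pathSum n v f a b = 0 := by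
  intro f
  induction f with
  | zero =>
    intro a b h
    have : a ≠ b := by intro e; subst e; omega
    simp [pathSum, this]
  | succ f ih =>
    intro a b h
    have hne : a ≠ b := by intro e; subst e; omega
    rw [pathSum, if_neg hne]
    by_cases hc : a.2 < n
    · rw [if_pos hc, ih (a.1, a.2 + 1) b (by simpa using h),
        ih (a.1 + 1, nxt n v a.2) b (by simp; omega)]
      ring
    · rw [if_neg hc]

/-- The path sum from column `c` on: sum over chains contained in `[c, n)`. -/
noncomputable def Ecol (n : ℕ) (v : ℕ → ℝ) (c m : ℕ) : MvPolynomial ℕ ℤ :=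
  ∑ S ∈ ((Finset.Ico c n).powersetCard m).filter
      (fun S => ∀ a ∈ S, ∀ b ∈ S, a ≠ b → 1 ≤ |v a - v b|),
    ∏ i ∈ S, MvPolynomial.X i

lemma Ecol_zero (n : ℕ) (v : ℕ → ℝ) (c : ℕ) : Ecol n v c 0 = 1 := by
  simp [Ecol, Finset.filter_singleton]

lemma Ecol_top (n : ℕ) (v : ℕ → ℝ) (j : ℕ) : Ecol n v n (j + 1) = 0 := by
  have h : (Finset.Ico n n) = ∅ := by simp
  rw [Ecol, h]
  rw [show Finset.powersetCard (j+1) (∅ : Finset ℕ) = ∅ by simp]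
  simp

lemma Ecol_rec (n : ℕ) (v : ℕ → ℝ)
    (hv : ∀ a b : ℕ, a < b → b < n → v a < v b) (c : ℕ) (hc : c < n) (j : ℕ) :
    Ecol n v c (j + 1) =
      Ecol n v (c + 1) (j + 1) + MvPolynomial.X c * Ecol n v (nxt n v c) j := by
  classical
  unfold Ecol
  rw [← Finset.sum_filter_add_sum_filter_not
    (((Finset.Ico c n).powersetCard (j + 1)).filter
      (fun S => ∀ a ∈ S, ∀ b ∈ S, a ≠ b → 1 ≤ |v a - v b|)) (fun S => c ∉ S)]
  congr 1
  · -- subsets not containing c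
    apply Finset.sum_congr _ (fun _ _ => rfl)
    ext S
    simp only [Finset.mem_filter, Finset.mem_powersetCard]
    constructor
    · rintro ⟨⟨⟨hsub, hcard⟩, hchain⟩, hnc⟩
      refine ⟨⟨fun x hx => ?_, hcard⟩, hchain⟩
      have := hsub hx
      simp only [Finset.mem_Ico] at this ⊢
      have : c ≤ x ∧ x < n := this
      have hxc : x ≠ c := by intro e; subst e; exact hnc hx
      omega
    · rintro ⟨⟨hsub, hcard⟩, hchain⟩
      refine ⟨⟨⟨fun x hx => ?_, hcard⟩, hchain⟩, fun hc' => ?_⟩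
      · have := hsub hx
        simp only [Finset.mem_Ico] at this ⊢
        omega
      · have := hsub hc'
        simp only [Finset.mem_Ico] at this
        omega
  · -- subsets containing c
    rw [Finset.mul_sum]
    refine Finset.sum_nbij' (fun S => S.erase c) (fun T => insert c T) ?_ ?_ ?_ ?_ ?_
    · -- forward membership
      rintro S hS
      simp only [Finset.mem_filter, Finset.mem_powersetCard, not_not] at hS
      obtain ⟨⟨⟨hsub, hcard⟩, hchain⟩, hcS⟩ := hS
      have hcn : c < n := hc
      simp only [Finset.mem_filter, Finset.mem_powersetCard]
      refine ⟨⟨fun x hx => ?_, ?_⟩, ?_⟩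
      · have hxS := Finset.mem_of_mem_erase hx
        have hxc : x ≠ c := Finset.ne_of_mem_erase hx
        have hxI := hsub hxS
        simp only [Finset.mem_Ico] at hxI ⊢
        have hxgt : c < x := lt_of_le_of_ne hxI.1 (Ne.symm hxc)
        have h1 : 1 ≤ |v x - v c| := hchain x hxS c hcS hxc
        have hlt : v c < v x := hv c x hxgt hxI.2
        have : v c + 1 ≤ v x := by
          rcases abs_cases (v x - v c) with ⟨he, _⟩ | ⟨he, _⟩ <;> linarith
        exact ⟨nxt_le_of n v c x hxI.2 this, hxI.2⟩
      · rw [Finset.card_erase_of_mem hcS, hcard]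
        omega
      · intro a ha b hb hab
        exact hchain a (Finset.mem_of_mem_erase ha) b (Finset.mem_of_mem_erase hb) hab
    · -- backward membership
      rintro T hT
      simp only [Finset.mem_filter, Finset.mem_powersetCard] at hT
      obtain ⟨⟨hsub, hcard⟩, hchain⟩ := hT
      have hcT : c ∉ T := by
        intro h
        have := hsub h
        simp only [Finset.mem_Ico] at this
        have := lt_nxt n v hv c hc
        omega
      have hnxn : ∀ x ∈ T, v c + 1 ≤ v x := by
        intro x hx
        have hxI := hsub hx
        simp only [Finset.mem_Ico] at hxI
        have hnx : nxt n v c < n := lt_of_le_of_lt hxI.1 hxI.2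
        have hvx : v c + 1 ≤ v (nxt n v c) := by
          rcases nxt_mem n v c with ⟨_, h2⟩ | h1
          · exact h2
          · omega
        rcases lt_or_eq_of_le hxI.1 with h' | h'
        · have := hv _ _ h' hxI.2; linarith
        · rw [← h']; exact hvx
      simp only [Finset.mem_filter, Finset.mem_powersetCard, not_not]
      refine ⟨⟨⟨fun x hx => ?_, ?_⟩, ?_⟩, Finset.mem_insert_self c T⟩
      · rcases Finset.mem_insert.mp hx with h | h
        · subst h; simp only [Finset.mem_Ico]; omega
        · have := hsub h
          simp only [Finset.mem_Ico] at this ⊢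
          have := lt_nxt n v hv c hc
          omega
      · rw [Finset.card_insert_of_notMem hcT, hcard]
      · intro a ha b hb hab
        rcases Finset.mem_insert.mp ha with ha' | ha' <;>
          rcases Finset.mem_insert.mp hb with hb' | hb'
        · subst ha'; subst hb'; exact absurd rfl hab
        · subst ha'
          have := hnxn b hb'
          rcases abs_cases (v a - v b) with ⟨he, _⟩ | ⟨he, _⟩ <;> linarith
        · subst hb'
          have := hnxn a ha'
          rcases abs_cases (v a - v b) with ⟨he, _⟩ | ⟨he, _⟩ <;> linarith
        · exact hchain a ha' b hb' hab
    · -- left inverse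
      rintro S hS
      simp only [Finset.mem_filter, not_not] at hS
      exact Finset.insert_erase hS.2
    · -- right inverse
      rintro T hT
      simp only [Finset.mem_filter, Finset.mem_powersetCard] at hT
      have hcT : c ∉ T := by
        intro h
        have := hT.1.1 h
        simp only [Finset.mem_Ico] at this
        have := lt_nxt n v hv c hc
        omega
      show (insert c T).erase c = T
      exact Finset.erase_insert hcT
    · -- function values
      rintro S hS
      simp only [Finset.mem_filter, not_not] at hS
      rw [Finset.mul_prod_erase S _ hS.2]

lemma key (n : ℕ) (v : ℕ → ℝ)
    (hv : ∀ a b : ℕ, a < b → b < n → v a < v b) :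
    ∀ (f c i j : ℕ), c ≤ n → n - c ≤ f →
      pathSum n v f (i, c) (i + j, n) = Ecol n v c j := by
  intro f
  induction f with
  | zero =>
    intro c i j hc hf
    have hcn : c = n := by omega
    rw [hcn]
    cases j with
    | zero => simp [pathSum, Ecol_zero]
    | succ j =>
      have hne : (i, n) ≠ (i + (j + 1), n) := by
        intro e
        have := congrArg Prod.fst e
        simp at this
      rw [show pathSum n v 0 (i, n) (i + (j + 1), n) =
        if (i, n) = (i + (j + 1), n) then 1 else 0 from rfl, if_neg hne, Ecol_top]
  | succ f ih =>
    intro c i j hc hf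
    by_cases hcn : c = n
    · rw [hcn]
      cases j with
      | zero => simp [pathSum, Ecol_zero]
      | succ j =>
        have hne : (i, n) ≠ (i + (j + 1), n) := by
          intro e
          have := congrArg Prod.fst e
          simp at this
        rw [pathSum, if_neg hne, if_neg (lt_irrefl n), Ecol_top]
    · have hclt : c < n := lt_of_le_of_ne hc hcn
      have hne : (i, c) ≠ (i + j, n) := by
        intro e
        have := congrArg Prod.snd e
        simp at this
        omega
      rw [pathSum, if_neg hne, if_pos hclt]
      have h1 : pathSum n v f (i, c + 1) (i + j, n) = Ecol n v (c + 1) j :=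
        ih (c + 1) i j (by omega) (by omega)
      cases j with
      | zero =>
        rw [h1, pathSum_zero_of_row_lt n v f _ _ (by simp)]
        simp [Ecol_zero]
      | succ j =>
        have hnxt1 : c < nxt n v c := lt_nxt n v hv c hclt
        have hnxt2 : nxt n v c ≤ n := nxt_le n v c
        have h2 : pathSum n v f (i + 1, nxt n v c) (i + (j + 1), n) =
            Ecol n v (nxt n v c) j := by
          have := ih (nxt n v c) (i + 1) j hnxt2 (by omega)
          rw [show i + 1 + j = i + (j + 1) by omega] at this
          exact this
        rw [h1, h2, Ecol_rec n v hv c hclt j]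

/-- in the grid `Γ_G` of an `n`-element unit interval order, the
sum of weights of all directed paths from `(i, 1)` to `(i + j, n + 1)` equals
`e_j^G` (here written 0-based: from `(i, 0)` to `(i + j, n)`; every path has at
most `n` steps, so fuel `n` enumerates all of them). -/
theorem stmt6 (n : ℕ) (v : ℕ → ℝ)
    (hv : ∀ a b : ℕ, a < b → b < n → v a < v b) (i j : ℕ) :
    pathSum n v n (i, 0) (i + j, n) = eGU n v j := by
  rw [key n v hv n 0 i j (Nat.zero_le n) (by omega)]
  unfold Ecol eGU
  rw [Finset.range_eq_Ico]
end

section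
/- Lindström–Gessel–Viennot lemma: Let Γ be a finite directed acyclic graph with edge weights in a commutative ring R, and let A = (a_1,...,a_n), B = (b_1,...,b_n) be tuples of vertices. Let e(a,b) be the sum over directed paths from a to b of the product of edge weights. Then det(e(a_i, b_j))_{i,j=1}^n = Σ over vertex-disjoint path systems (ρ_1,...,ρ_n), where ρ_i goes from a_i to b_{σ(i)} for some permutation σ, of sign(σ)·∏_i w(ρ_i). -/
/-- The weight of a directed path, given as its list of vertices: the product
of the weights of its edges. -/
def pathWeight {V R : Type*} [CommRing R] (wt : V → V → R) (l : List V) : R :=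
  ((l.zip l.tail).map fun p => wt p.1 p.2).prod

set_option linter.unusedSectionVars false
namespace LGVAux

open List

variable {V : Type*}

section Split
variable [DecidableEq V]

def preL : List V → V → List V
  | [], _ => []
  | x :: xs, v => if x = v then [] else x :: preL xs v

def postL : List V → V → List V
  | [], _ => []
  | x :: xs, v => if x = v then xs else postL xs v

lemma preL_postL_eq : ∀ {l : List V} {v : V}, v ∈ l → l = preL l v ++ v :: postL l v
  | [], v, h => by cases h
  | x :: xs, v, h => by
    by_cases hx : x = v
    · subst hx; simp [preL, postL]
    · have hv : v ∈ xs := by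
        rcases List.mem_cons.1 h with h1 | h1
        · exact absurd h1.symm hx
        · exact h1
      simp only [preL, postL, if_neg hx, cons_append, cons.injEq, true_and]
      exact preL_postL_eq hv

lemma not_mem_preL : ∀ {l : List V} {v : V}, v ∉ preL l v
  | [], v => by simp [preL]
  | x :: xs, v => by
    by_cases hx : x = v
    · simp [preL, hx]
    · simp only [preL, if_neg hx, mem_cons, not_or]
      exact ⟨fun h => hx h.symm, not_mem_preL⟩

lemma preL_postL_of : ∀ {A : List V} {v : V} (B : List V), v ∉ A →
    preL (A ++ v :: B) v = A ∧ postL (A ++ v :: B) v = B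
  | [], v, B, _ => by simp [preL, postL]
  | a :: A, v, B, hA => by
    have ha : a ≠ v := fun h => hA (by simp [h])
    have hA' : v ∉ A := fun h => hA (by simp [h])
    have := preL_postL_of (A := A) (v := v) B hA'
    simp only [cons_append, preL, postL, if_neg ha]
    rw [this.1, this.2]
    exact ⟨rfl, rfl⟩

end Split

open Classical in
noncomputable def firstP (p : V → Prop) : List V → Option V
  | [] => none
  | x :: xs => if p x then some x else firstP p xs

lemma firstP_isSome {p : V → Prop} : ∀ {l : List V}, (∃ x ∈ l, p x) → (firstP p l).isSome
  | [], h => by simp at h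
  | x :: xs, h => by
    by_cases hx : p x
    · simp [firstP, hx]
    · rcases h with ⟨y, hy, hpy⟩
      rcases List.mem_cons.1 hy with rfl | hy'
      · exact absurd hpy hx
      · simpa [firstP, hx] using firstP_isSome ⟨y, hy', hpy⟩

lemma firstP_split {p : V → Prop} : ∀ {l : List V} {v : V}, firstP p l = some v →
    p v ∧ ∃ A B, l = A ++ v :: B ∧ v ∉ A ∧ ∀ x ∈ A, ¬ p x
  | [], v, h => by simp [firstP] at h
  | x :: xs, v, h => by
    by_cases hx : p x
    · simp only [firstP, if_pos hx, Option.some.injEq] at h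
      subst h
      exact ⟨hx, [], xs, rfl, by simp, by simp⟩
    · simp only [firstP, if_neg hx] at h
      obtain ⟨hpv, A, B, hl, hvA, hAp⟩ := firstP_split h
      refine ⟨hpv, x :: A, B, by simp [hl], ?_, ?_⟩
      · simp only [mem_cons, not_or]
        exact ⟨fun hv => hx (hv ▸ hpv), hvA⟩
      · intro y hy
        rcases List.mem_cons.1 hy with rfl | hy'
        · exact hx
        · exact hAp y hy'

lemma firstP_intro {p : V → Prop} : ∀ {A : List V} {v : V} (B : List V),
    (∀ x ∈ A, ¬ p x) → p v → firstP p (A ++ v :: B) = some v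
  | [], v, B, _, hv => by simp [firstP, hv]
  | a :: A, v, B, hA, hv => by
    have ha : ¬ p a := hA a (by simp)
    simp only [cons_append, firstP, if_neg ha]
    exact firstP_intro B (fun x hx => hA x (by simp [hx])) hv

section Chain

variable {E : V → V → Prop}

lemma chain'_transGen : ∀ {x : V} {xs : List V}, Chain' E (x :: xs) → ∀ {y}, y ∈ xs →
    Relation.TransGen E x y
  | x, [], _, y, hy => by cases hy
  | x, z :: zs, h, y, hy => by
    unfold List.Chain' at h
    rw [List.isChain_cons_cons] at h
    rcases List.mem_cons.1 hy with rfl | hy'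
    · exact Relation.TransGen.single h.1
    · exact Relation.TransGen.head h.1 (chain'_transGen h.2 hy')

lemma chain'_nodup (hacyc : ∀ x : V, ¬ Relation.TransGen E x x) :
    ∀ {l : List V}, Chain' E l → l.Nodup
  | [], _ => by simp
  | x :: xs, h => by
    rw [List.nodup_cons]
    refine ⟨fun hx => hacyc x (chain'_transGen h hx), chain'_nodup hacyc h.tail⟩

end Chain

section HeadLast
variable {E : V → V → Prop}

lemma head?_cross (A : List V) (v : V) (B B' : List V) :
    (A ++ v :: B).head? = (A ++ v :: B').head? := by
  cases A <;> rfl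

lemma getLast?_cross (A : List V) (v : V) (B : List V) :
    (A ++ v :: B).getLast? = (v :: B).getLast? :=
  List.getLast?_append_cons A v B

lemma chain_splice {A₁ B₁ A₂ B₂ : List V} {v : V}
    (h1 : Chain' E (A₁ ++ v :: B₁)) (h2 : Chain' E (A₂ ++ v :: B₂)) :
    Chain' E (A₁ ++ v :: B₂) := by
  have e1 : A₁ ++ v :: B₁ = (A₁ ++ [v]) ++ B₁ := by simp
  have e2 : A₂ ++ v :: B₂ = (A₂ ++ [v]) ++ B₂ := by simp
  have e3 : A₁ ++ v :: B₂ = (A₁ ++ [v]) ++ B₂ := by simp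
  unfold List.Chain' at h1 h2 ⊢
  rw [e1, List.isChain_append] at h1
  rw [e2, List.isChain_append] at h2
  rw [e3, List.isChain_append]
  refine ⟨h1.1, h2.2.1, ?_⟩
  intro x hx y hy
  have hlast : (A₁ ++ [v]).getLast? = some v := by
    rw [List.getLast?_append_cons]; rfl
  rw [hlast] at hx
  have hxv : v = x := by simpa using hx
  subst hxv
  refine h2.2.2 v ?_ y hy
  rw [List.getLast?_append_cons]; rfl

end HeadLast

section Weight
variable {R : Type*} [CommRing R] (wt : V → V → R)

lemma pw_nil : pathWeight wt ([] : List V) = 1 := rfl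

lemma pw_single (v : V) : pathWeight wt [v] = 1 := rfl

lemma pw_cons_cons (x y : V) (l : List V) :
    pathWeight wt (x :: y :: l) = wt x y * pathWeight wt (y :: l) := by
  simp [pathWeight]

lemma pw_split_aux : ∀ (A : List V) (hd v : V) (B : List V),
    pathWeight wt (hd :: (A ++ v :: B)) =
      pathWeight wt (hd :: (A ++ [v])) * pathWeight wt (v :: B)
  | [], hd, v, B => by
    simp only [List.nil_append, pw_cons_cons, pw_single]
    ring
  | a :: A, hd, v, B => by
    rw [List.cons_append, pw_cons_cons, pw_split_aux A a v B,
      List.cons_append, pw_cons_cons]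
    ring

lemma pw_split (A : List V) (v : V) (B : List V) :
    pathWeight wt (A ++ v :: B) =
      pathWeight wt (A ++ [v]) * pathWeight wt (v :: B) := by
  cases A with
  | nil => simp [pw_single]
  | cons a A => exact pw_split_aux wt A a v B

end Weight

section Swap

variable [DecidableEq V] {n : ℕ}

def Pv (ρ : Fin n → List V) (i : Fin n) (x : V) : Prop := ∃ j, j ≠ i ∧ x ∈ ρ j

open Classical in
noncomputable def bset (ρ : Fin n → List V) : Finset (Fin n) :=
  Finset.univ.filter (fun i => ∃ x ∈ ρ i, Pv ρ i x)

lemma mem_bset {ρ : Fin n → List V} {i : Fin n} : i ∈ bset ρ ↔ ∃ x ∈ ρ i, Pv ρ i x := by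
  simp [bset]

variable (ρ : Fin n → List V)

noncomputable def iIdx (h : (bset ρ).Nonempty) : Fin n := (bset ρ).min' h

lemma iIdx_spec (h : (bset ρ).Nonempty) :
    ∃ x ∈ ρ (iIdx ρ h), Pv ρ (iIdx ρ h) x := mem_bset.1 ((bset ρ).min'_mem h)

noncomputable def vtx (h : (bset ρ).Nonempty) : V :=
  (firstP (Pv ρ (iIdx ρ h)) (ρ (iIdx ρ h))).get (firstP_isSome (iIdx_spec ρ h))

lemma firstP_vtx (h : (bset ρ).Nonempty) :
    firstP (Pv ρ (iIdx ρ h)) (ρ (iIdx ρ h)) = some (vtx ρ h) :=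
  (Option.some_get _).symm

noncomputable def AI (h : (bset ρ).Nonempty) : List V := preL (ρ (iIdx ρ h)) (vtx ρ h)
noncomputable def BI (h : (bset ρ).Nonempty) : List V := postL (ρ (iIdx ρ h)) (vtx ρ h)

lemma vtx_spec (h : (bset ρ).Nonempty) :
    Pv ρ (iIdx ρ h) (vtx ρ h) ∧
    ρ (iIdx ρ h) = AI ρ h ++ vtx ρ h :: BI ρ h ∧
    ∀ x ∈ AI ρ h, ¬ Pv ρ (iIdx ρ h) x := by
  obtain ⟨hp, A, B, hl, hvA, hA⟩ := firstP_split (firstP_vtx ρ h)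
  have hAB := preL_postL_of (A := A) (v := vtx ρ h) B hvA
  refine ⟨hp, ?_, ?_⟩
  · rw [AI, BI, hl, hAB.1, hAB.2]
  · intro x hx
    rw [AI, hl, hAB.1] at hx
    exact hA x hx

open Classical in
noncomputable def jset (h : (bset ρ).Nonempty) : Finset (Fin n) :=
  Finset.univ.filter (fun j => j ≠ iIdx ρ h ∧ vtx ρ h ∈ ρ j)

lemma jset_nonempty (h : (bset ρ).Nonempty) : (jset ρ h).Nonempty := by
  obtain ⟨j, hj, hmem⟩ := (vtx_spec ρ h).1
  exact ⟨j, by simp [jset, hj, hmem]⟩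

noncomputable def jIdx (h : (bset ρ).Nonempty) : Fin n := (jset ρ h).min' (jset_nonempty ρ h)

lemma jIdx_spec (h : (bset ρ).Nonempty) :
    jIdx ρ h ≠ iIdx ρ h ∧ vtx ρ h ∈ ρ (jIdx ρ h) := by
  have : jIdx ρ h ∈ jset ρ h := (jset ρ h).min'_mem (jset_nonempty ρ h)
  simpa [jset] using this

lemma jIdx_min (h : (bset ρ).Nonempty) {k : Fin n} (hk : k ≠ iIdx ρ h)
    (hmem : vtx ρ h ∈ ρ k) : jIdx ρ h ≤ k :=
  Finset.min'_le _ _ (by simp [jset, hk, hmem])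

noncomputable def AJ (h : (bset ρ).Nonempty) : List V := preL (ρ (jIdx ρ h)) (vtx ρ h)
noncomputable def BJ (h : (bset ρ).Nonempty) : List V := postL (ρ (jIdx ρ h)) (vtx ρ h)

lemma decompJ (h : (bset ρ).Nonempty) :
    ρ (jIdx ρ h) = AJ ρ h ++ vtx ρ h :: BJ ρ h :=
  preL_postL_eq (jIdx_spec ρ h).2

lemma vtx_mem_i (h : (bset ρ).Nonempty) : vtx ρ h ∈ ρ (iIdx ρ h) := by
  rw [(vtx_spec ρ h).2.1]; simp

lemma iIdx_lt_jIdx (h : (bset ρ).Nonempty) : iIdx ρ h < jIdx ρ h := by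
  have hj : jIdx ρ h ∈ bset ρ :=
    mem_bset.2 ⟨vtx ρ h, (jIdx_spec ρ h).2, iIdx ρ h, (jIdx_spec ρ h).1.symm, vtx_mem_i ρ h⟩
  have hle : iIdx ρ h ≤ jIdx ρ h := (bset ρ).min'_le _ hj
  exact lt_of_le_of_ne hle (Ne.symm (jIdx_spec ρ h).1)

noncomputable def swapPaths (h : (bset ρ).Nonempty) : Fin n → List V :=
  Function.update
    (Function.update ρ (iIdx ρ h) (AI ρ h ++ vtx ρ h :: BJ ρ h))
    (jIdx ρ h) (AJ ρ h ++ vtx ρ h :: BI ρ h)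

lemma swapPaths_i (h : (bset ρ).Nonempty) :
    swapPaths ρ h (iIdx ρ h) = AI ρ h ++ vtx ρ h :: BJ ρ h := by
  rw [swapPaths, Function.update_of_ne (iIdx_lt_jIdx ρ h).ne, Function.update_self]

lemma swapPaths_j (h : (bset ρ).Nonempty) :
    swapPaths ρ h (jIdx ρ h) = AJ ρ h ++ vtx ρ h :: BI ρ h := by
  rw [swapPaths, Function.update_self]

lemma swapPaths_other (h : (bset ρ).Nonempty) {k : Fin n}
    (hki : k ≠ iIdx ρ h) (hkj : k ≠ jIdx ρ h) : swapPaths ρ h k = ρ k := by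
  rw [swapPaths, Function.update_of_ne hkj, Function.update_of_ne hki]

lemma mem_AI (h : (bset ρ).Nonempty) {x : V} (hx : x ∈ AI ρ h) : x ∈ ρ (iIdx ρ h) := by
  rw [(vtx_spec ρ h).2.1]; simp [hx]

lemma mem_BI (h : (bset ρ).Nonempty) {x : V} (hx : x ∈ BI ρ h) : x ∈ ρ (iIdx ρ h) := by
  rw [(vtx_spec ρ h).2.1]; simp [hx]

lemma mem_AJ (h : (bset ρ).Nonempty) {x : V} (hx : x ∈ AJ ρ h) : x ∈ ρ (jIdx ρ h) := by
  rw [decompJ ρ h]; simp [hx]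

lemma mem_BJ (h : (bset ρ).Nonempty) {x : V} (hx : x ∈ BJ ρ h) : x ∈ ρ (jIdx ρ h) := by
  rw [decompJ ρ h]; simp [hx]

lemma support (h : (bset ρ).Nonempty) {k : Fin n} {x : V} (hx : x ∈ swapPaths ρ h k) :
    x ∈ ρ k ∨ x ∈ ρ (iIdx ρ h) ∨ x ∈ ρ (jIdx ρ h) := by
  by_cases hkj : k = jIdx ρ h
  · subst hkj
    rw [swapPaths_j] at hx
    rcases List.mem_append.1 hx with hx | hx
    · exact Or.inl (mem_AJ ρ h hx)
    · rcases List.mem_cons.1 hx with rfl | hx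
      · exact Or.inl (jIdx_spec ρ h).2
      · exact Or.inr (Or.inl (mem_BI ρ h hx))
  · by_cases hki : k = iIdx ρ h
    · subst hki
      rw [swapPaths_i] at hx
      rcases List.mem_append.1 hx with hx | hx
      · exact Or.inl (mem_AI ρ h hx)
      · rcases List.mem_cons.1 hx with rfl | hx
        · exact Or.inl (vtx_mem_i ρ h)
        · exact Or.inr (Or.inr (mem_BJ ρ h hx))
    · rw [swapPaths_other ρ h hki hkj] at hx
      exact Or.inl hx

lemma vtx_mem_swap_i (h : (bset ρ).Nonempty) : vtx ρ h ∈ swapPaths ρ h (iIdx ρ h) := by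
  rw [swapPaths_i]; simp

lemma vtx_mem_swap_j (h : (bset ρ).Nonempty) : vtx ρ h ∈ swapPaths ρ h (jIdx ρ h) := by
  rw [swapPaths_j]; simp

lemma bset_swap_nonempty (h : (bset ρ).Nonempty) : (bset (swapPaths ρ h)).Nonempty :=
  ⟨iIdx ρ h, mem_bset.2 ⟨vtx ρ h, vtx_mem_swap_i ρ h,
    jIdx ρ h, (jIdx_spec ρ h).1, vtx_mem_swap_j ρ h⟩⟩

lemma iIdx_swap (h : (bset ρ).Nonempty) (h' : (bset (swapPaths ρ h)).Nonempty) :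
    iIdx (swapPaths ρ h) h' = iIdx ρ h := by
  refine le_antisymm ?_ ?_
  · exact (bset (swapPaths ρ h)).min'_le _ (mem_bset.2 ⟨vtx ρ h, vtx_mem_swap_i ρ h,
      jIdx ρ h, (jIdx_spec ρ h).1, vtx_mem_swap_j ρ h⟩)
  · apply Finset.le_min'
    intro k hk
    by_contra hlt
    push_neg at hlt
    have hknoti : k ≠ iIdx ρ h := hlt.ne
    have hknotj : k ≠ jIdx ρ h := hlt.trans (iIdx_lt_jIdx ρ h) |>.ne
    have hknotbad : k ∉ bset ρ := fun hmem => absurd ((bset ρ).min'_le _ hmem) (not_le.2 hlt)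
    apply hknotbad
    rw [mem_bset] at hk ⊢
    obtain ⟨x, hxk, m, hm, hxm⟩ := hk
    rw [swapPaths_other ρ h hknoti hknotj] at hxk
    rcases support ρ h hxm with hx | hx | hx
    · exact ⟨x, hxk, m, hm, hx⟩
    · exact ⟨x, hxk, iIdx ρ h, Ne.symm hknoti, hx⟩
    · exact ⟨x, hxk, jIdx ρ h, Ne.symm hknotj, hx⟩
lemma disjoint_AI_BI (h : (bset ρ).Nonempty) (hnd : (ρ (iIdx ρ h)).Nodup) {x : V} (hA : x ∈ AI ρ h) :
    x ∉ BI ρ h := by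
  rw [(vtx_spec ρ h).2.1, List.nodup_append] at hnd
  intro hB
  exact hnd.2.2 x hA x (by simp [hB]) rfl

lemma not_Pv_swap_AI (h : (bset ρ).Nonempty) {x : V} (hA : x ∈ AI ρ h)
    (hnd : (ρ (iIdx ρ h)).Nodup) : ¬ Pv (swapPaths ρ h) (iIdx ρ h) x := by
  rintro ⟨m, hm, hxm⟩
  have hnp := (vtx_spec ρ h).2.2 x hA
  by_cases hmj : m = jIdx ρ h
  · subst hmj
    rw [swapPaths_j] at hxm
    rcases List.mem_append.1 hxm with hx | hx
    · exact hnp ⟨jIdx ρ h, (jIdx_spec ρ h).1, mem_AJ ρ h hx⟩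
    · rcases List.mem_cons.1 hx with rfl | hx
      · exact not_mem_preL hA
      · exact disjoint_AI_BI ρ h hnd hA hx
  · rw [swapPaths_other ρ h hm hmj] at hxm
    exact hnp ⟨m, hm, hxm⟩

lemma vtx_swap (h : (bset ρ).Nonempty) (h' : (bset (swapPaths ρ h)).Nonempty)
    (hnd : (ρ (iIdx ρ h)).Nodup) : vtx (swapPaths ρ h) h' = vtx ρ h := by
  have key : firstP (Pv (swapPaths ρ h) (iIdx (swapPaths ρ h) h'))
      (swapPaths ρ h (iIdx (swapPaths ρ h) h')) = some (vtx ρ h) := by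
    rw [iIdx_swap ρ h h', swapPaths_i]
    refine firstP_intro _ (fun x hx => not_Pv_swap_AI ρ h hx hnd) ?_
    exact ⟨jIdx ρ h, (jIdx_spec ρ h).1, vtx_mem_swap_j ρ h⟩
  have := Option.some_get (firstP_isSome (iIdx_spec (swapPaths ρ h) h'))
  rw [vtx, ← Option.some_inj, this, key]

lemma jIdx_swap (h : (bset ρ).Nonempty) (h' : (bset (swapPaths ρ h)).Nonempty)
    (hnd : (ρ (iIdx ρ h)).Nodup) : jIdx (swapPaths ρ h) h' = jIdx ρ h := by
  have hjset : jset (swapPaths ρ h) h' = jset ρ h := by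
    ext k
    simp only [jset, Finset.mem_filter, Finset.mem_univ, true_and,
      iIdx_swap ρ h h', vtx_swap ρ h h' hnd]
    constructor
    · rintro ⟨hk, hmem⟩
      refine ⟨hk, ?_⟩
      by_cases hkj : k = jIdx ρ h
      · subst hkj; exact (jIdx_spec ρ h).2
      · rwa [swapPaths_other ρ h hk hkj] at hmem
    · rintro ⟨hk, hmem⟩
      refine ⟨hk, ?_⟩
      by_cases hkj : k = jIdx ρ h
      · subst hkj; exact vtx_mem_swap_j ρ h
      · rwa [swapPaths_other ρ h hk hkj]
  refine le_antisymm ?_ ?_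
  · exact Finset.min'_le _ _ (by
      rw [show jset (swapPaths ρ h) h' = jset ρ h from hjset]
      exact (jset ρ h).min'_mem (jset_nonempty ρ h))
  · exact Finset.min'_le _ _ (by
      rw [← hjset]
      exact (jset (swapPaths ρ h) h').min'_mem (jset_nonempty _ h'))

lemma AI_swap (h : (bset ρ).Nonempty) (h' : (bset (swapPaths ρ h)).Nonempty) (hnd : (ρ (iIdx ρ h)).Nodup) :
    AI (swapPaths ρ h) h' = AI ρ h ∧ BI (swapPaths ρ h) h' = BJ ρ h := by
  have e : swapPaths ρ h (iIdx (swapPaths ρ h) h') = AI ρ h ++ vtx ρ h :: BJ ρ h := by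
    rw [iIdx_swap ρ h h', swapPaths_i]
  constructor
  · rw [AI, vtx_swap ρ h h' hnd, e]
    exact (preL_postL_of (BJ ρ h) not_mem_preL).1
  · rw [BI, vtx_swap ρ h h' hnd, e]
    exact (preL_postL_of (BJ ρ h) not_mem_preL).2

lemma AJ_swap (h : (bset ρ).Nonempty) (h' : (bset (swapPaths ρ h)).Nonempty) (hnd : (ρ (iIdx ρ h)).Nodup) :
    AJ (swapPaths ρ h) h' = AJ ρ h ∧ BJ (swapPaths ρ h) h' = BI ρ h := by
  have e : swapPaths ρ h (jIdx (swapPaths ρ h) h') = AJ ρ h ++ vtx ρ h :: BI ρ h := by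
    rw [jIdx_swap ρ h h' hnd, swapPaths_j]
  constructor
  · rw [AJ, vtx_swap ρ h h' hnd, e]
    exact (preL_postL_of (BI ρ h) not_mem_preL).1
  · rw [BJ, vtx_swap ρ h h' hnd, e]
    exact (preL_postL_of (BI ρ h) not_mem_preL).2

lemma swap_swap (h : (bset ρ).Nonempty) (h' : (bset (swapPaths ρ h)).Nonempty) (hnd : (ρ (iIdx ρ h)).Nodup) :
    swapPaths (swapPaths ρ h) h' = ρ := by
  funext k
  rw [swapPaths, vtx_swap ρ h h' hnd, iIdx_swap ρ h h', jIdx_swap ρ h h' hnd,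
    (AI_swap ρ h h' hnd).1, (AI_swap ρ h h' hnd).2,
    (AJ_swap ρ h h' hnd).1, (AJ_swap ρ h h' hnd).2]
  by_cases hkj : k = jIdx ρ h
  · subst hkj
    rw [Function.update_self, ← decompJ ρ h]
  · rw [Function.update_of_ne hkj]
    by_cases hki : k = iIdx ρ h
    · subst hki
      rw [Function.update_self, ← (vtx_spec ρ h).2.1]
    · rw [Function.update_of_ne hki, swapPaths_other ρ h hki hkj]

lemma head?_swap (h : (bset ρ).Nonempty) (k : Fin n) :
    (swapPaths ρ h k).head? = (ρ k).head? := by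
  by_cases hkj : k = jIdx ρ h
  · subst hkj
    rw [swapPaths_j, decompJ ρ h]
    exact head?_cross _ _ _ _
  · by_cases hki : k = iIdx ρ h
    · subst hki
      rw [swapPaths_i, (vtx_spec ρ h).2.1]
      exact head?_cross _ _ _ _
    · rw [swapPaths_other ρ h hki hkj]

lemma getLast?_swap_i (h : (bset ρ).Nonempty) :
    (swapPaths ρ h (iIdx ρ h)).getLast? = (ρ (jIdx ρ h)).getLast? := by
  rw [swapPaths_i, getLast?_cross, decompJ ρ h, getLast?_cross]

lemma getLast?_swap_j (h : (bset ρ).Nonempty) :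
    (swapPaths ρ h (jIdx ρ h)).getLast? = (ρ (iIdx ρ h)).getLast? := by
  rw [swapPaths_j, getLast?_cross, (vtx_spec ρ h).2.1, getLast?_cross]

lemma chain_swap {E : V → V → Prop} (h : (bset ρ).Nonempty)
    (hchain : ∀ k, List.Chain' E (ρ k)) (k : Fin n) :
    List.Chain' E (swapPaths ρ h k) := by
  have hci : List.Chain' E (AI ρ h ++ vtx ρ h :: BI ρ h) := by
    rw [← (vtx_spec ρ h).2.1]; exact hchain _
  have hcj : List.Chain' E (AJ ρ h ++ vtx ρ h :: BJ ρ h) := by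
    rw [← decompJ ρ h]; exact hchain _
  by_cases hkj : k = jIdx ρ h
  · subst hkj; rw [swapPaths_j]; exact chain_splice hcj hci
  · by_cases hki : k = iIdx ρ h
    · subst hki; rw [swapPaths_i]; exact chain_splice hci hcj
    · rw [swapPaths_other ρ h hki hkj]; exact hchain k

lemma prod_swap {R : Type*} [CommRing R] (wt : V → V → R) (h : (bset ρ).Nonempty) :
    ∏ k, pathWeight wt (swapPaths ρ h k) = ∏ k, pathWeight wt (ρ k) := by
  have hij : iIdx ρ h ≠ jIdx ρ h := (iIdx_lt_jIdx ρ h).ne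
  have key : ∀ f : Fin n → List V, ∏ k, pathWeight wt (f k)
      = pathWeight wt (f (jIdx ρ h)) * (pathWeight wt (f (iIdx ρ h)) *
        ∏ k ∈ (Finset.univ.erase (jIdx ρ h)).erase (iIdx ρ h), pathWeight wt (f k)) := by
    intro f
    rw [← Finset.mul_prod_erase Finset.univ _ (Finset.mem_univ (jIdx ρ h)),
        ← Finset.mul_prod_erase _ _ (Finset.mem_erase.2 ⟨hij, Finset.mem_univ _⟩)]
  rw [key (swapPaths ρ h), key ρ]
  have hrest : ∀ k ∈ (Finset.univ.erase (jIdx ρ h)).erase (iIdx ρ h),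
      pathWeight wt (swapPaths ρ h k) = pathWeight wt (ρ k) := by
    intro k hk
    rw [swapPaths_other ρ h (Finset.mem_erase.1 hk).1
      (Finset.mem_erase.1 (Finset.mem_erase.1 hk).2).1]
  have e1 := pw_split wt (AJ ρ h) (vtx ρ h) (BI ρ h)
  have e2 := pw_split wt (AI ρ h) (vtx ρ h) (BJ ρ h)
  have e3 := pw_split wt (AI ρ h) (vtx ρ h) (BI ρ h)
  have e4 := pw_split wt (AJ ρ h) (vtx ρ h) (BJ ρ h)
  rw [Finset.prod_congr rfl hrest, swapPaths_j, swapPaths_i,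
    (vtx_spec ρ h).2.1, decompJ ρ h, e1, e2, e3, e4]
  ring

lemma bset_empty_iff (ρ' : Fin n → List V) : ¬ (bset ρ').Nonempty ↔
    ∀ i j : Fin n, i ≠ j → ∀ x ∈ ρ' i, x ∉ ρ' j := by
  constructor
  · intro hne i j hij x hxi hxj
    exact hne ⟨i, mem_bset.2 ⟨x, hxi, j, Ne.symm hij, hxj⟩⟩
  · rintro hd ⟨i, hi⟩
    obtain ⟨x, hxi, j, hj, hxj⟩ := mem_bset.1 hi
    exact hd i j (Ne.symm hj) x hxi hxj

end Swap

section Cancel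

variable [DecidableEq V] {n : ℕ} {R : Type*} [CommRing R]

open Classical in
lemma bad_sum_zero (E : V → V → Prop) (hacyc : ∀ x : V, ¬ Relation.TransGen E x x)
    (wt : V → V → R) (a b : Fin n → V) (paths : V → V → Finset (List V))
    (hpaths : ∀ x y (l : List V), l ∈ paths x y ↔
      (l.head? = some x ∧ l.getLast? = some y ∧ l.Chain' E)) :
    ∑ x ∈ (Finset.univ : Finset (Equiv.Perm (Fin n))).sigma
        (fun σ => (Fintype.piFinset (fun i => paths (a i) (b (σ i)))).filter
          (fun r => (bset r).Nonempty)),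
      ((Equiv.Perm.sign x.1 : ℤ) • ∏ i, pathWeight wt (x.2 i)) = 0 := by
  have hmem : ∀ x : (Σ _ : Equiv.Perm (Fin n), Fin n → List V),
      x ∈ (Finset.univ : Finset (Equiv.Perm (Fin n))).sigma
        (fun σ => (Fintype.piFinset (fun i => paths (a i) (b (σ i)))).filter
          (fun r => (bset r).Nonempty)) → (bset x.2).Nonempty :=
    fun x hx => (Finset.mem_filter.1 (Finset.mem_sigma.1 hx).2).2
  have hpimem : ∀ x, x ∈ (Finset.univ : Finset (Equiv.Perm (Fin n))).sigma
        (fun σ => (Fintype.piFinset (fun i => paths (a i) (b (σ i)))).filter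
          (fun r => (bset r).Nonempty)) → ∀ i, x.2 i ∈ paths (a i) (b (x.1 i)) :=
    fun x hx => Fintype.mem_piFinset.1 (Finset.mem_filter.1 (Finset.mem_sigma.1 hx).2).1
  refine Finset.sum_involution
    (fun x hx => ⟨x.1 * Equiv.swap (iIdx x.2 (hmem x hx)) (jIdx x.2 (hmem x hx)),
      swapPaths x.2 (hmem x hx)⟩) ?_ ?_ ?_ ?_
  · rintro ⟨σ, r⟩ hx
    dsimp only
    have hb : (bset r).Nonempty := hmem _ hx
    have hsign : ((Equiv.Perm.sign (σ * Equiv.swap (iIdx r hb) (jIdx r hb))) : ℤ)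
        = -(Equiv.Perm.sign σ : ℤ) := by
      rw [Equiv.Perm.sign_mul, Equiv.Perm.sign_swap (iIdx_lt_jIdx r hb).ne]
      simp
    rw [prod_swap r wt hb, hsign, neg_smul]
    simp
  · rintro ⟨σ, r⟩ hx - heq
    have hb : (bset r).Nonempty := hmem _ hx
    have h1 : σ * Equiv.swap (iIdx r hb) (jIdx r hb) = σ := congrArg Sigma.fst heq
    have h2 : Equiv.swap (iIdx r hb) (jIdx r hb) = 1 :=
      mul_left_cancel (a := σ) (by rw [mul_one]; exact h1)
    have h3 : jIdx r hb = iIdx r hb := by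
      calc jIdx r hb = Equiv.swap (iIdx r hb) (jIdx r hb) (iIdx r hb) :=
            (Equiv.swap_apply_left _ _).symm
        _ = iIdx r hb := by rw [h2]; rfl
    exact (iIdx_lt_jIdx r hb).ne' h3
  · rintro ⟨σ, r⟩ hx
    dsimp only
    have hb : (bset r).Nonempty := hmem _ hx
    have hr : ∀ i, r i ∈ paths (a i) (b (σ i)) := hpimem _ hx
    have hchain : ∀ k, List.Chain' E (r k) := fun k => ((hpaths _ _ _).1 (hr k)).2.2
    rw [Finset.mem_sigma]
    refine ⟨Finset.mem_univ _, Finset.mem_filter.2 ⟨?_, bset_swap_nonempty r hb⟩⟩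
    rw [Fintype.mem_piFinset]
    intro k
    rw [hpaths]
    refine ⟨?_, ?_, chain_swap r hb hchain k⟩
    · show (swapPaths r hb k).head? = some (a k)
      rw [head?_swap]
      exact ((hpaths _ _ _).1 (hr k)).1
    · show (swapPaths r hb k).getLast? = some (b ((σ * Equiv.swap (iIdx r hb) (jIdx r hb)) k))
      by_cases hkj : k = jIdx r hb
      · subst hkj
        rw [getLast?_swap_j]
        simpa [Equiv.Perm.mul_apply, Equiv.swap_apply_right] using
          ((hpaths _ _ _).1 (hr (iIdx r hb))).2.1
      · by_cases hki : k = iIdx r hb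
        · subst hki
          rw [getLast?_swap_i]
          simpa [Equiv.Perm.mul_apply, Equiv.swap_apply_left] using
            ((hpaths _ _ _).1 (hr (jIdx r hb))).2.1
        · rw [swapPaths_other r hb hki hkj]
          simpa [Equiv.Perm.mul_apply, Equiv.swap_apply_of_ne_of_ne hki hkj] using
            ((hpaths _ _ _).1 (hr k)).2.1
  · rintro ⟨σ, r⟩ hx
    have hb : (bset r).Nonempty := hmem _ hx
    have hr : ∀ i, r i ∈ paths (a i) (b (σ i)) := hpimem _ hx
    have hchain : ∀ k, List.Chain' E (r k) := fun k => ((hpaths _ _ _).1 (hr k)).2.2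
    have hnd : (r (iIdx r hb)).Nodup := chain'_nodup hacyc (hchain _)
    have hb2 : (bset (swapPaths r hb)).Nonempty := bset_swap_nonempty r hb
    have e1 : (σ * Equiv.swap (iIdx r hb) (jIdx r hb)) *
        Equiv.swap (iIdx (swapPaths r hb) hb2) (jIdx (swapPaths r hb) hb2) = σ := by
      rw [iIdx_swap r hb hb2, jIdx_swap r hb hb2 hnd, mul_assoc, Equiv.swap_mul_self, mul_one]
    have e2 : swapPaths (swapPaths r hb) hb2 = r := swap_swap r hb hb2 hnd
    exact Sigma.ext e1 (heq_of_eq e2)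

end Cancel

end LGVAux

open LGVAux in
/-- Lindström–Gessel–Viennot: let `Γ` be a finite directed acyclic
graph with edge relation `E` and edge weights `wt` in a commutative ring, and
`a, b : Fin n → V` tuples of vertices.  `paths x y` is the (finite) set of all
directed paths from `x` to `y`, and `sys` is the (finite) set of all
non-intersecting multipaths `(σ, ρ)`, i.e. pairwise vertex-disjoint families of
paths `ρ i : a i → b (σ i)`.  Then
`det (e(a_i, b_j)) = Σ_{(σ,ρ) ∈ sys} sign σ · Π_i w(ρ_i)`. -/
theorem stmt7 {V R : Type*} [Fintype V] [DecidableEq V] [CommRing R]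
    (E : V → V → Prop) (hacyc : ∀ x : V, ¬ Relation.TransGen E x x)
    (wt : V → V → R) (n : ℕ) (a b : Fin n → V)
    (paths : V → V → Finset (List V))
    (hpaths : ∀ x y (l : List V), l ∈ paths x y ↔
      (l.head? = some x ∧ l.getLast? = some y ∧ l.Chain' E))
    (sys : Finset (Equiv.Perm (Fin n) × (Fin n → List V)))
    (hsys : ∀ s, s ∈ sys ↔
      ((∀ i, s.2 i ∈ paths (a i) (b (s.1 i))) ∧
       ∀ i j : Fin n, i ≠ j → ∀ x ∈ s.2 i, x ∉ s.2 j)) :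
    Matrix.det (Matrix.of fun i j : Fin n => ∑ l ∈ paths (a i) (b j), pathWeight wt l) =
      ∑ s ∈ sys, (Equiv.Perm.sign s.1 : ℤ) • ∏ i : Fin n, pathWeight wt (s.2 i) := by
  classical
  have hdet : Matrix.det (Matrix.of fun i j : Fin n =>
        ∑ l ∈ paths (a i) (b j), pathWeight wt l)
      = ∑ σ : Equiv.Perm (Fin n), ∑ r ∈ Fintype.piFinset (fun i => paths (a i) (b (σ i))),
          (Equiv.Perm.sign σ : ℤ) • ∏ i, pathWeight wt (r i) := by
    rw [← Matrix.det_transpose, Matrix.det_apply]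
    refine Finset.sum_congr rfl fun σ _ => ?_
    have h1 : ∀ i : Fin n, (Matrix.of fun i j : Fin n =>
        ∑ l ∈ paths (a i) (b j), pathWeight wt l).transpose (σ i) i
        = ∑ l ∈ paths (a i) (b (σ i)), pathWeight wt l := fun i => rfl
    rw [Finset.prod_congr rfl (fun i _ => h1 i), Finset.prod_univ_sum, Units.smul_def,
      Finset.smul_sum]
  have hbad : ∑ σ : Equiv.Perm (Fin n),
      ∑ r ∈ (Fintype.piFinset (fun i => paths (a i) (b (σ i)))).filter
          (fun r => (bset r).Nonempty),
        (Equiv.Perm.sign σ : ℤ) • ∏ i, pathWeight wt (r i) = 0 := by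
    have h0 := bad_sum_zero (n := n) E hacyc wt a b paths hpaths
    rw [Finset.sum_sigma] at h0
    convert h0 using 1
  have hgood : ∑ s ∈ sys, ((Equiv.Perm.sign s.1 : ℤ) • ∏ i, pathWeight wt (s.2 i))
      = ∑ σ : Equiv.Perm (Fin n),
          ∑ r ∈ (Fintype.piFinset (fun i => paths (a i) (b (σ i)))).filter
              (fun r => ¬ (bset r).Nonempty),
            (Equiv.Perm.sign σ : ℤ) • ∏ i, pathWeight wt (r i) := by
    have hsys' : sys = Finset.univ.biUnion (fun σ : Equiv.Perm (Fin n) =>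
        ((Fintype.piFinset (fun i => paths (a i) (b (σ i)))).filter
          (fun r => ¬ (bset r).Nonempty)).image (fun r => (σ, r))) := by
      ext s
      rw [hsys]
      simp only [Finset.mem_biUnion, Finset.mem_univ, true_and, Finset.mem_image,
        Finset.mem_filter, Fintype.mem_piFinset]
      constructor
      · rintro ⟨h1, h2⟩
        exact ⟨s.1, s.2, ⟨h1, (bset_empty_iff s.2).2 h2⟩, rfl⟩
      · rintro ⟨σ, r, ⟨h1, h2⟩, rfl⟩
        exact ⟨h1, (bset_empty_iff r).1 h2⟩
    have hdisj : Set.PairwiseDisjoint (↑(Finset.univ : Finset (Equiv.Perm (Fin n))))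
        (fun σ : Equiv.Perm (Fin n) =>
          ((Fintype.piFinset (fun i => paths (a i) (b (σ i)))).filter
            (fun r => ¬ (bset r).Nonempty)).image (fun r => (σ, r))) := by
      intro σ1 _ σ2 _ hne
      refine Finset.disjoint_left.2 fun s hs1 hs2 => ?_
      obtain ⟨r1, _, rfl⟩ := Finset.mem_image.1 hs1
      obtain ⟨r2, _, he⟩ := Finset.mem_image.1 hs2
      exact hne (congrArg Prod.fst he).symm
    rw [hsys', Finset.sum_biUnion hdisj]
    refine Finset.sum_congr rfl fun σ _ => ?_
    rw [Finset.sum_image (fun x _ y _ hxy => congrArg Prod.snd hxy)]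
  rw [hdet, hgood,
    Finset.sum_congr rfl (fun σ _ => (Finset.sum_filter_add_sum_filter_not
      (Fintype.piFinset (fun i => paths (a i) (b (σ i))))
      (fun r => (bset r).Nonempty)
      (fun r => (Equiv.Perm.sign σ : ℤ) • ∏ i, pathWeight wt (r i))).symm),
    Finset.sum_add_distrib, hbad, zero_add]
end

section
/- Stanley's sink theorem: For a finite graph G with X_G = Σ_λ c_λ e_λ, and any j ∈ ℕ, the number of acyclic orientations of G with exactly j sinks equals Σ over partitions λ of length j of c_λ. -/
open scoped Classical

/-- The `m`-th elementary symmetric function in the variables `x_0, x_1, ...`,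
as a multivariate power series. -/
noncomputable def eps (m : ℕ) : MvPowerSeries ℕ ℚ :=
  fun d => if d.support.card = m ∧ ∀ i ∈ d.support, d i = 1 then 1 else 0

/-- `e_λ = ∏ e_{λ_i}` for a partition `λ`. -/
noncomputable def epsP {N : ℕ} (P : Nat.Partition N) : MvPowerSeries ℕ ℚ :=
  (P.parts.map eps).prod

/-- The chromatic symmetric function of a finite graph. -/
noncomputable def XG {V : Type*} [Fintype V] (G : SimpleGraph V) : MvPowerSeries ℕ ℚ :=
  fun d => (Nat.card {c : V → ℕ //
    (∀ u w : V, G.Adj u w → c u ≠ c w) ∧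
    ∀ i : ℕ, (Finset.univ.filter fun v => c v = i).card = d i} : ℚ)

namespace Stanley12

open Finset

section PhiDef

/-- monomial of a composition: `g i` at color `i` -/
noncomputable def dg {k : ℕ} (g : Fin k → ℕ) : ℕ →₀ ℕ := ∑ i : Fin k, Finsupp.single (i : ℕ) (g i)

lemma dg_apply {k : ℕ} (g : Fin k → ℕ) (j : ℕ) :
    dg g j = if h : j < k then g ⟨j, h⟩ else 0 := by
  rw [dg, Finsupp.finset_sum_apply]
  by_cases h : j < k
  · rw [dif_pos h]
    rw [Finset.sum_eq_single (⟨j, h⟩ : Fin k)]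
    · rw [Finsupp.single_apply, if_pos rfl]
    · intro i _ hne
      rw [Finsupp.single_apply, if_neg]
      intro he; exact hne (Fin.ext he)
    · intro hmem; exact absurd (Finset.mem_univ _) hmem
  · rw [dif_neg h]
    apply Finset.sum_eq_zero
    intro i _
    rw [Finsupp.single_apply, if_neg]
    intro he
    exact h (he ▸ i.isLt)

/-- compositions of `N` into `k` positive parts -/
noncomputable def CS (N k : ℕ) : Finset (Fin k → ℕ) :=
  ((Finset.univ : Finset (Fin k → Fin (N+1))).image (fun f i => (f i : ℕ))).filter
    (fun g => (∀ i, 0 < g i) ∧ ∑ i, g i = N)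

lemma mem_CS {N k : ℕ} {g : Fin k → ℕ} : g ∈ CS N k ↔ ((∀ i, 0 < g i) ∧ ∑ i, g i = N) := by
  rw [CS, Finset.mem_filter]
  constructor
  · rintro ⟨-, h⟩; exact h
  · intro h
    have hb : ∀ i, g i < N + 1 := by
      intro i
      have : g i ≤ ∑ i', g i' := Finset.single_le_sum (fun i' _ => Nat.zero_le _) (Finset.mem_univ i)
      omega
    exact ⟨Finset.mem_image.2 ⟨fun i => ⟨g i, hb i⟩, Finset.mem_univ _, rfl⟩, h⟩

/-- the extraction functional -/
noncomputable def Phi (N : ℕ) (t : ℚ) (F : MvPowerSeries ℕ ℚ) : ℚ :=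
  ∑ k ∈ Finset.range (N+1), (-1:ℚ)^(N+k) *
    ∑ g ∈ CS N k, (1 - (1-t)^(dg g 0)) * (MvPowerSeries.coeff (dg g) F)

lemma Phi_sum {ι : Type*} [Fintype ι] (N : ℕ) (t : ℚ) (F : ι → MvPowerSeries ℕ ℚ) (c : ι → ℚ) :
    Phi N t (∑ P, c P • F P) = ∑ P, c P * Phi N t (F P) := by
  unfold Phi
  have h1 : ∀ k ∈ Finset.range (N+1), (-1:ℚ)^(N+k) *
      ∑ g ∈ CS N k, (1 - (1-t)^(dg g 0)) * (MvPowerSeries.coeff (dg g) (∑ P, c P • F P))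
        = ∑ P, c P * ((-1:ℚ)^(N+k) *
            ∑ g ∈ CS N k, (1 - (1-t)^(dg g 0)) * (MvPowerSeries.coeff (dg g) (F P))) := by
    intro k _
    have h2 : ∀ g ∈ CS N k, (1 - (1-t)^(dg g 0)) * (MvPowerSeries.coeff (dg g) (∑ P, c P • F P))
        = ∑ P, c P * ((1 - (1-t)^(dg g 0)) * (MvPowerSeries.coeff (dg g) (F P))) := by
      intro g _
      rw [map_sum, Finset.mul_sum]
      apply Finset.sum_congr rfl
      intro P _
      rw [MvPowerSeries.coeff_smul]
      ring
    rw [Finset.sum_congr rfl h2, Finset.sum_comm, Finset.mul_sum]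
    apply Finset.sum_congr rfl
    intro P _
    rw [Finset.mul_sum, Finset.mul_sum, Finset.mul_sum]
    apply Finset.sum_congr rfl
    intro g _
    ring
  rw [Finset.sum_congr rfl h1, Finset.sum_comm]
  apply Finset.sum_congr rfl
  intro P _
  rw [Finset.mul_sum]

section DistDef
variable {V : Type*} [Fintype V] [DecidableEq V]

/-- distribution of a coloring -/
noncomputable def distk (k : ℕ) (c : V → ℕ) : Fin k → ℕ :=
  fun i => (Finset.univ.filter (fun v => c v = (i : ℕ))).card

end DistDef

end PhiDef

variable {W : Type*} [Fintype W] [DecidableEq W] (H : SimpleGraph W) (o : W → W → Prop)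

/-- Layered surjective colorings of `S` with colors `0..k-1`, junk value `k` off `S`,
compatible with the orientation `o`. -/
noncomputable def lset (S : Finset W) (k : ℕ) : Finset (W → ℕ) :=
  ((Finset.univ : Finset (W → Fin (k+1))).image (fun f v => (f v : ℕ))).filter
    (fun b => (∀ v ∉ S, b v = k) ∧ (∀ v ∈ S, b v < k) ∧ (∀ i < k, ∃ v ∈ S, b v = i) ∧
      (∀ u ∈ S, ∀ w ∈ S, H.Adj u w → (o u w ↔ b w < b u)))

lemma mem_lset {S : Finset W} {k : ℕ} {b : W → ℕ} :
    b ∈ lset H o S k ↔ ((∀ v ∉ S, b v = k) ∧ (∀ v ∈ S, b v < k) ∧ (∀ i < k, ∃ v ∈ S, b v = i) ∧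
      (∀ u ∈ S, ∀ w ∈ S, H.Adj u w → (o u w ↔ b w < b u))) := by
  classical
  unfold lset
  rw [Finset.mem_filter]
  constructor
  · rintro ⟨-, h⟩; exact h
  · intro h
    refine ⟨?_, h⟩
    rw [Finset.mem_image]
    have hb : ∀ v, b v < k + 1 := by
      intro v
      by_cases hv : v ∈ S
      · exact lt_trans (h.2.1 v hv) (Nat.lt_succ_self k)
      · rw [h.1 v hv]; exact Nat.lt_succ_self k
    refine ⟨fun v => ⟨b v, hb v⟩, Finset.mem_univ _, rfl⟩

/-- sinks of the restriction of `o` to `S` -/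
noncomputable def snks (S : Finset W) : Finset W := S.filter (fun x => ∀ u ∈ S, ¬ o x u)

lemma lset_empty_zero : lset H o (∅ : Finset W) 0 = {fun _ => 0} := by
  ext b
  rw [mem_lset, Finset.mem_singleton]
  constructor
  · rintro ⟨h1, -, -, -⟩
    funext v; exact h1 v (by simp)
  · rintro rfl
    refine ⟨fun v _ => rfl, by simp, by simp, by simp⟩

lemma lset_nonpos {S : Finset W} (hS : S.Nonempty) : lset H o S 0 = ∅ := by
  ext b
  simp only [mem_lset, Finset.notMem_empty, iff_false]
  rintro ⟨-, h2, -, -⟩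
  obtain ⟨v, hv⟩ := hS
  exact Nat.not_lt_zero _ (h2 v hv)

lemma lset_eq_empty_of_gt {S : Finset W} {k : ℕ} (hk : S.card < k) : lset H o S k = ∅ := by
  ext b
  simp only [mem_lset, Finset.notMem_empty, iff_false]
  rintro ⟨-, -, h3, -⟩
  obtain ⟨v₀, -, -⟩ := h3 0 (by omega)
  have h3' : ∀ i : ℕ, ∃ v, i < k → (v ∈ S ∧ b v = i) := by
    intro i
    by_cases hi : i < k
    · obtain ⟨v, hv, hbv⟩ := h3 i hi
      exact ⟨v, fun _ => ⟨hv, hbv⟩⟩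
    · exact ⟨v₀, fun h => absurd h hi⟩
  choose F hF using h3'
  have hcard : (Finset.range k).card ≤ S.card := by
    apply Finset.card_le_card_of_injOn F
    · intro i hi
      exact (hF i (Finset.mem_range.1 hi)).1
    · intro i hi j hj hij
      have h1 := (hF i (Finset.mem_range.1 hi)).2
      have h2 := (hF j (Finset.mem_range.1 hj)).2
      rw [← h1, ← h2, hij]
  rw [Finset.card_range] at hcard
  omega


section Acyclic

lemma snks_nonempty (hacyc : ∀ x, ¬ Relation.TransGen o x x) {S : Finset W} (hS : S.Nonempty) : (snks o S).Nonempty := by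
  have hirr : IsIrrefl W (Relation.TransGen (flip o)) := by
    constructor
    intro x hx
    exact hacyc x ((Relation.transGen_swap).1 hx)
  have htr : IsTrans W (Relation.TransGen (flip o)) := by
    constructor; intro a b c hab hbc; exact hab.trans hbc
  have hwf : WellFounded (Relation.TransGen (flip o)) :=
    Finite.wellFounded_of_trans_of_irrefl _
  have hwf2 : WellFounded (flip o) := Subrelation.wf (fun h => Relation.TransGen.single h) hwf
  obtain ⟨v, hv⟩ := hS
  obtain ⟨x, hxS, hxmin⟩ := hwf2.has_min (↑S : Set W) ⟨v, hv⟩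
  refine ⟨x, ?_⟩
  rw [snks, Finset.mem_filter]
  exact ⟨hxS, fun u hu hoxu => hxmin u hu hoxu⟩

lemma zero_fiber_subset_snks (hadj : ∀ u w, o u w → H.Adj u w) {S : Finset W} {k : ℕ} {b : W → ℕ} (hb : b ∈ lset H o S k) :
    S.filter (fun v => b v = 0) ⊆ snks o S := by
  obtain ⟨-, -, -, hcomp⟩ := (mem_lset H o).1 hb
  intro x hx
  rw [Finset.mem_filter] at hx
  obtain ⟨hxS, hbx⟩ := hx
  rw [snks, Finset.mem_filter]
  refine ⟨hxS, fun u hu hoxu => ?_⟩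
  have hAdj := hadj _ _ hoxu
  have := (hcomp x hxS u hu hAdj).1 hoxu
  omega

lemma zero_fiber_nonempty {S : Finset W} {k : ℕ} {b : W → ℕ} (hb : b ∈ lset H o S (k+1)) :
    (S.filter (fun v => b v = 0)).Nonempty := by
  obtain ⟨-, -, hsurj, -⟩ := (mem_lset H o).1 hb
  obtain ⟨v, hv, hbv⟩ := hsurj 0 (Nat.succ_pos k)
  exact ⟨v, Finset.mem_filter.2 ⟨hv, hbv⟩⟩

lemma card_fiber_eq (hiff : ∀ u w, H.Adj u w → (o u w ↔ ¬ o w u)) {S Z : Finset W} {k : ℕ} (hZs : Z ⊆ snks o S) (hZne : Z.Nonempty) :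
    ((lset H o S (k+1)).filter (fun b => S.filter (fun v => b v = 0) = Z)).card
      = (lset H o (S \ Z) k).card := by
  have hZS : Z ⊆ S := hZs.trans (Finset.filter_subset _ _)
  refine Finset.card_bij' (fun b _ => fun v => if v ∈ S \ Z then b v - 1 else k)
    (fun b' _ => fun v => if v ∈ S \ Z then b' v + 1 else if v ∈ Z then 0 else (k+1))
    ?hi ?hj ?li ?ri
  case hi =>
    intro b hb
    rw [Finset.mem_filter] at hb
    obtain ⟨hbl, hfib⟩ := hb
    obtain ⟨hjunk, hbd, hsurj, hcomp⟩ := (mem_lset H o).1 hbl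
    have hne0 : ∀ v ∈ S \ Z, b v ≠ 0 := by
      intro v hv hbv
      rw [Finset.mem_sdiff] at hv
      exact hv.2 (hfib ▸ Finset.mem_filter.2 ⟨hv.1, hbv⟩)
    rw [mem_lset]
    refine ⟨fun v hv => if_neg hv, ?_, ?_, ?_⟩
    · intro v hv
      rw [if_pos hv]
      have h1 := hbd v (Finset.mem_sdiff.1 hv).1
      have h2 := hne0 v hv
      omega
    · intro i hi
      obtain ⟨v, hv, hbv⟩ := hsurj (i+1) (by omega)
      have hvZ : v ∉ Z := by
        intro hvZ
        have := hfib ▸ hvZ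
        rw [Finset.mem_filter] at this
        omega
      refine ⟨v, Finset.mem_sdiff.2 ⟨hv, hvZ⟩, ?_⟩
      rw [if_pos (Finset.mem_sdiff.2 ⟨hv, hvZ⟩)]
      omega
    · intro x hx y hy hAdj
      rw [if_pos hx, if_pos hy]
      rw [Finset.mem_sdiff] at hx hy
      have h1 := hne0 x (Finset.mem_sdiff.2 hx)
      have h2 := hne0 y (Finset.mem_sdiff.2 hy)
      rw [hcomp x hx.1 y hy.1 hAdj]
      omega
  case hj =>
    intro b' hb'
    obtain ⟨hjunk, hbd, hsurj, hcomp⟩ := (mem_lset H o).1 hb'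
    have hsnk : ∀ z ∈ Z, ∀ u ∈ S, ¬ o z u := by
      intro z hz u hu
      have := hZs hz
      rw [snks, Finset.mem_filter] at this
      exact this.2 u hu
    rw [Finset.mem_filter]
    constructor
    · rw [mem_lset]
      refine ⟨?_, ?_, ?_, ?_⟩
      · intro v hv
        rw [if_neg (by simp [Finset.mem_sdiff]; intro h; exact absurd h hv),
          if_neg (fun hvZ => hv (hZS hvZ))]
      · intro v hv
        by_cases hvz : v ∈ S \ Z
        · rw [if_pos hvz]
          have := hbd v hvz
          omega
        · rw [if_neg hvz, if_pos (by rw [Finset.mem_sdiff] at hvz; tauto)]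
          omega
      · intro i hi
        rcases Nat.eq_zero_or_pos i with rfl | hipos
        · obtain ⟨z, hz⟩ := hZne
          refine ⟨z, hZS hz, ?_⟩
          rw [if_neg (by simp [Finset.mem_sdiff, hz]), if_pos hz]
        · obtain ⟨v, hv, hbv⟩ := hsurj (i-1) (by omega)
          have hvS : v ∈ S := (Finset.mem_sdiff.1 hv).1
          refine ⟨v, hvS, ?_⟩
          rw [if_pos hv]
          omega
      · intro x hx y hy hAdj
        by_cases hxz : x ∈ S \ Z <;> by_cases hyz : y ∈ S \ Z
        · rw [if_pos hxz, if_pos hyz, hcomp x hxz y hyz hAdj]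
          omega
        · -- y ∈ Z : sink, x not
          have hyZ : y ∈ Z := by rw [Finset.mem_sdiff] at hyz; tauto
          rw [if_pos hxz, if_neg hyz, if_pos hyZ]
          have hnoyx : ¬ o y x := hsnk y hyZ x hx
          have := hiff x y hAdj
          constructor
          · intro; omega
          · intro; tauto
        · have hxZ : x ∈ Z := by rw [Finset.mem_sdiff] at hxz; tauto
          rw [if_neg hxz, if_pos hxZ]
          have hnoxy : ¬ o x y := hsnk x hxZ y hy
          constructor
          · intro h; exact absurd h hnoxy
          · intro h
            by_cases hyzz : y ∈ S \ Z
            · rw [if_pos hyzz] at h; omega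
            · have : y ∈ Z := by rw [Finset.mem_sdiff] at hyzz; tauto
              rw [if_neg hyzz, if_pos this] at h; omega
        · have hxZ : x ∈ Z := by rw [Finset.mem_sdiff] at hxz; tauto
          have hyZ : y ∈ Z := by rw [Finset.mem_sdiff] at hyz; tauto
          rw [if_neg hxz, if_pos hxZ, if_neg hyz, if_pos hyZ]
          have hnoxy : ¬ o x y := hsnk x hxZ y hy
          constructor
          · intro h; exact absurd h hnoxy
          · intro h; omega
    · -- fiber condition
      ext v
      rw [Finset.mem_filter]
      constructor
      · rintro ⟨hvS, hv0⟩
        dsimp only at hv0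
        by_cases hvz : v ∈ S \ Z
        · rw [if_pos hvz] at hv0; omega
        · rw [Finset.mem_sdiff] at hvz; tauto
      · intro hvZ
        refine ⟨hZS hvZ, ?_⟩
        dsimp only
        rw [if_neg (fun hmem => (Finset.mem_sdiff.1 hmem).2 hvZ), if_pos hvZ]
  case li =>
    intro b hb
    dsimp only
    rw [Finset.mem_filter] at hb
    obtain ⟨hbl, hfib⟩ := hb
    obtain ⟨hjunk, hbd, hsurj, hcomp⟩ := (mem_lset H o).1 hbl
    funext v
    by_cases hvz : v ∈ S \ Z
    · rw [if_pos hvz, if_pos hvz]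
      have hv0 : b v ≠ 0 := by
        intro h
        rw [Finset.mem_sdiff] at hvz
        exact hvz.2 (hfib ▸ Finset.mem_filter.2 ⟨hvz.1, h⟩)
      omega
    · rw [if_neg hvz]
      by_cases hvZ : v ∈ Z
      · rw [if_pos hvZ]
        have := hfib ▸ hvZ
        rw [Finset.mem_filter] at this
        omega
      · rw [if_neg hvZ]
        have hvS : v ∉ S := by rw [Finset.mem_sdiff] at hvz; tauto
        exact (hjunk v hvS).symm
  case ri =>
    intro b' hb'
    dsimp only
    obtain ⟨hjunk, hbd, hsurj, hcomp⟩ := (mem_lset H o).1 hb'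
    funext v
    by_cases hvz : v ∈ S \ Z
    · rw [if_pos hvz, if_pos hvz]
      omega
    · rw [if_neg hvz]
      exact (hjunk v hvz).symm

lemma fiber_empty (hadj : ∀ u w, o u w → H.Adj u w) {S Z : Finset W} {k : ℕ} (hbad : ¬ (Z ⊆ snks o S ∧ Z.Nonempty)) :
    (lset H o S (k+1)).filter (fun b => S.filter (fun v => b v = 0) = Z) = ∅ := by
  rw [Finset.filter_eq_empty_iff]
  intro b hb hfib
  exact hbad ⟨hfib ▸ zero_fiber_subset_snks H o hadj hb, hfib ▸ zero_fiber_nonempty H o hb⟩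


lemma sum_powerset_pow (M : Finset W) (x : ℚ) : ∑ Z ∈ M.powerset, x^Z.card = (x+1)^M.card := by
  rw [Finset.sum_powerset]
  have h : ∀ j ∈ Finset.range (M.card + 1), ∑ Z ∈ Finset.powersetCard j M, x^Z.card
      = M.card.choose j • x^j := fun j _ => Finset.sum_powersetCard j M (fun n => x^n)
  rw [Finset.sum_congr rfl h, add_pow]
  apply Finset.sum_congr rfl
  intro j hj
  rw [one_pow, nsmul_eq_mul]
  ring

lemma sum_powerset_neg_one (M : Finset W) (hM : M.Nonempty) :
    ∑ Z ∈ M.powerset, (-1:ℚ)^Z.card = 0 := by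
  rw [sum_powerset_pow M (-1)]
  rw [neg_add_cancel, zero_pow]
  exact fun h => hM.ne_empty (Finset.card_eq_zero.1 h)

/-- the "good" sets: nonempty subsets of the sinks -/
noncomputable def goodZ (S : Finset W) : Finset (Finset W) :=
  ((snks o S).powerset).filter (fun Z => Z.Nonempty)

lemma sum_lset_decomp (hadj : ∀ u w, o u w → H.Adj u w)
    (hiff : ∀ u w, H.Adj u w → (o u w ↔ ¬ o w u)) (S : Finset W) (k : ℕ)
    (u : Finset W → ℚ) :
    ∑ b ∈ lset H o S (k+1), u (S.filter fun v => b v = 0)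
      = ∑ Z ∈ goodZ o S, u Z * ((lset H o (S \ Z) k).card : ℚ) := by
  have hmap : ∀ b ∈ lset H o S (k+1), (S.filter fun v => b v = 0) ∈ goodZ o S := by
    intro b hb
    rw [goodZ, Finset.mem_filter, Finset.mem_powerset]
    exact ⟨zero_fiber_subset_snks H o hadj hb, zero_fiber_nonempty H o hb⟩
  rw [← Finset.sum_fiberwise_of_maps_to hmap (fun b => u (S.filter fun v => b v = 0))]
  apply Finset.sum_congr rfl
  intro Z hZ
  rw [goodZ, Finset.mem_filter, Finset.mem_powerset] at hZ
  have : ∀ b ∈ (lset H o S (k+1)).filter (fun b => (S.filter fun v => b v = 0) = Z),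
      u (S.filter fun v => b v = 0) = u Z := by
    intro b hb
    rw [(Finset.mem_filter.1 hb).2]
  rw [Finset.sum_congr rfl this, Finset.sum_const, card_fiber_eq H o hiff hZ.1 hZ.2,
    nsmul_eq_mul, mul_comm]

/-- alternating count of layered colorings -/
noncomputable def Asum (S : Finset W) : ℚ :=
  ∑ k ∈ Finset.range (S.card + 1), (-1 : ℚ)^(S.card + k) * ((lset H o S k).card : ℚ)

lemma Asum_decomp_core (hadj : ∀ u w, o u w → H.Adj u w)
    (hiff : ∀ u w, H.Adj u w → (o u w ↔ ¬ o w u)) (S : Finset W) (hS : S.Nonempty)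
    (u : Finset W → ℚ) :
    ∑ k ∈ Finset.range (S.card + 1), (-1 : ℚ)^(S.card + k) *
        ∑ b ∈ lset H o S k, u (S.filter fun v => b v = 0)
      = ∑ Z ∈ goodZ o S, (-1 : ℚ)^(Z.card + 1) * u Z * Asum H o (S \ Z) := by
  rw [Finset.sum_range_succ']
  have h0 : (-1 : ℚ)^(S.card + 0) * ∑ b ∈ lset H o S 0, u (S.filter fun v => b v = 0) = 0 := by
    rw [lset_nonpos H o hS]
    simp
  rw [h0, add_zero]
  have hstep : ∀ k ∈ Finset.range S.card,
      (-1 : ℚ)^(S.card + (k+1)) * ∑ b ∈ lset H o S (k+1), u (S.filter fun v => b v = 0)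
        = ∑ Z ∈ goodZ o S, (-1 : ℚ)^(S.card + (k+1)) * (u Z * ((lset H o (S \ Z) k).card : ℚ)) := by
    intro k hk
    rw [sum_lset_decomp H o hadj hiff S k u, Finset.mul_sum]
  rw [Finset.sum_congr rfl hstep, Finset.sum_comm]
  apply Finset.sum_congr rfl
  intro Z hZ
  rw [goodZ, Finset.mem_filter, Finset.mem_powerset] at hZ
  have hZS : Z ⊆ S := hZ.1.trans (Finset.filter_subset _ _)
  have hcard : (S \ Z).card = S.card - Z.card := Finset.card_sdiff_of_subset hZS
  have hZpos : 1 ≤ Z.card := Finset.card_pos.2 hZ.2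
  have hZle : Z.card ≤ S.card := Finset.card_le_card hZS
  -- sign identity
  have hsgn : ∀ k : ℕ, (-1 : ℚ)^(S.card + (k+1)) = (-1 : ℚ)^(Z.card + 1) * (-1 : ℚ)^((S \ Z).card + k) := by
    intro k
    rw [← pow_add, hcard]
    congr 1
    omega
  have hA : Asum H o (S \ Z) = ∑ k ∈ Finset.range S.card, (-1 : ℚ)^((S \ Z).card + k) * ((lset H o (S \ Z) k).card : ℚ) := by
    rw [Asum]
    apply Finset.sum_subset
    · intro x hx
      rw [Finset.mem_range] at hx ⊢
      omega
    · intro x hx hx2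
      rw [Finset.mem_range] at hx hx2
      rw [lset_eq_empty_of_gt H o (by omega)]
      simp
  rw [hA, Finset.mul_sum]
  apply Finset.sum_congr rfl
  intro k hk
  rw [hsgn k]
  ring

lemma Asum_eq_one (hadj : ∀ u w, o u w → H.Adj u w)
    (hiff : ∀ u w, H.Adj u w → (o u w ↔ ¬ o w u))
    (hacyc : ∀ x, ¬ Relation.TransGen o x x) (S : Finset W) : Asum H o S = 1 := by
  induction S using Finset.strongInductionOn with
  | _ S ih =>
    rcases Finset.eq_empty_or_nonempty S with rfl | hS
    · rw [Asum]
      simp [lset_empty_zero]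
    · have hcore := Asum_decomp_core H o hadj hiff S hS (fun _ => 1)
      have hL : Asum H o S = ∑ k ∈ Finset.range (S.card + 1), (-1 : ℚ)^(S.card + k) *
          ∑ b ∈ lset H o S k, (fun (_ : Finset W) => (1:ℚ)) (S.filter fun v => b v = 0) := by
        rw [Asum]
        apply Finset.sum_congr rfl
        intro k hk
        rw [Finset.sum_const, nsmul_eq_mul, mul_one]
      rw [hL, hcore]
      have hind : ∀ Z ∈ goodZ o S, (-1 : ℚ)^(Z.card + 1) * (fun (_ : Finset W) => (1:ℚ)) Z * Asum H o (S \ Z)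
          = (-1 : ℚ)^(Z.card + 1) := by
        intro Z hZ
        rw [goodZ, Finset.mem_filter, Finset.mem_powerset] at hZ
        have hZS : Z ⊆ S := hZ.1.trans (Finset.filter_subset _ _)
        rw [ih (S \ Z) (Finset.sdiff_ssubset hZS hZ.2)]
        simp
      rw [Finset.sum_congr rfl hind]
      -- ∑ over nonempty subsets of snks of (-1)^(|Z|+1) = 1
      have hM : (snks o S).Nonempty := snks_nonempty o hacyc hS
      have hsplit : (snks o S).powerset = insert ∅ (goodZ o S) := by
        ext Z
        rw [Finset.mem_insert, goodZ, Finset.mem_filter]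
        constructor
        · intro h
          rcases Finset.eq_empty_or_nonempty Z with rfl | hZne
          · exact Or.inl rfl
          · exact Or.inr ⟨h, hZne⟩
        · rintro (rfl | ⟨h, -⟩)
          · exact Finset.empty_mem_powerset _
          · exact h
      have hnotmem : (∅ : Finset W) ∉ goodZ o S := by
        rw [goodZ, Finset.mem_filter]
        rintro ⟨-, h⟩
        exact h.ne_empty rfl
      have htot : ∑ Z ∈ (snks o S).powerset, (-1 : ℚ)^(Z.card + 1) = 0 := by
        have h1 := sum_powerset_neg_one (W := W) (snks o S) hM
        calc ∑ Z ∈ (snks o S).powerset, (-1 : ℚ)^(Z.card + 1)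
            = ∑ Z ∈ (snks o S).powerset, (-1) * (-1 : ℚ)^(Z.card) := by
              apply Finset.sum_congr rfl
              intro Z hZ
              ring
          _ = (-1) * ∑ Z ∈ (snks o S).powerset, (-1 : ℚ)^(Z.card) := by
              rw [Finset.mul_sum]
          _ = 0 := by rw [h1]; ring
      rw [hsplit, Finset.sum_insert hnotmem] at htot
      simp only [Finset.card_empty, zero_add, pow_one] at htot
      linarith

lemma Bsum_eq (hadj : ∀ u w, o u w → H.Adj u w)
    (hiff : ∀ u w, H.Adj u w → (o u w ↔ ¬ o w u))
    (hacyc : ∀ x, ¬ Relation.TransGen o x x) (S : Finset W) (hS : S.Nonempty) (t : ℚ) :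
    ∑ k ∈ Finset.range (S.card + 1), (-1 : ℚ)^(S.card + k) *
        ∑ b ∈ lset H o S k, (1 - (1-t)^((S.filter fun v => b v = 0).card))
      = t ^ (snks o S).card := by
  have hcore := Asum_decomp_core H o hadj hiff S hS (fun Z => 1 - (1-t)^Z.card)
  rw [hcore]
  have hind : ∀ Z ∈ goodZ o S, (-1 : ℚ)^(Z.card + 1) * (1 - (1-t)^Z.card) * Asum H o (S \ Z)
      = (-1 : ℚ)^(Z.card + 1) * (1 - (1-t)^Z.card) := by
    intro Z hZ
    rw [Asum_eq_one H o hadj hiff hacyc]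
    ring
  rw [Finset.sum_congr rfl hind]
  have hM : (snks o S).Nonempty := snks_nonempty o hacyc hS
  have hsplit : (snks o S).powerset = insert ∅ (goodZ o S) := by
    ext Z
    rw [Finset.mem_insert, goodZ, Finset.mem_filter]
    constructor
    · intro h
      rcases Finset.eq_empty_or_nonempty Z with rfl | hZne
      · exact Or.inl rfl
      · exact Or.inr ⟨h, hZne⟩
    · rintro (rfl | ⟨h, -⟩)
      · exact Finset.empty_mem_powerset _
      · exact h
  have hnotmem : (∅ : Finset W) ∉ goodZ o S := by
    rw [goodZ, Finset.mem_filter]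
    rintro ⟨-, h⟩
    exact h.ne_empty rfl
  have htot : ∑ Z ∈ (snks o S).powerset, (-1 : ℚ)^(Z.card + 1) * (1 - (1-t)^Z.card)
      = t ^ (snks o S).card := by
    have h1 := sum_powerset_neg_one (W := W) (snks o S) hM
    have h2 := sum_powerset_pow (W := W) (snks o S) (t - 1)
    have hterm : ∀ Z ∈ (snks o S).powerset, (-1 : ℚ)^(Z.card + 1) * (1 - (1-t)^Z.card)
        = -((-1:ℚ)^Z.card) + (t-1)^Z.card := by
      intro Z hZ
      have : ((-1:ℚ))^Z.card * (1-t)^Z.card = (-(1-t))^Z.card := by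
        rw [← mul_pow]
        ring_nf
      have h3 : (-(1-t) : ℚ) = t - 1 := by ring
      calc (-1 : ℚ)^(Z.card + 1) * (1 - (1-t)^Z.card)
          = -((-1:ℚ)^Z.card) + (-1:ℚ)^Z.card * (1-t)^Z.card := by ring
        _ = -((-1:ℚ)^Z.card) + (t-1)^Z.card := by rw [this, h3]
    have h3 : ∑ Z ∈ (snks o S).powerset, -((-1:ℚ)^Z.card)
        = -∑ Z ∈ (snks o S).powerset, ((-1:ℚ)^Z.card) := by
      rw [← Finset.sum_neg_distrib]
    rw [Finset.sum_congr rfl hterm, Finset.sum_add_distrib, h3, h1, h2]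
    have : (t - 1 + 1 : ℚ) = t := by ring
    rw [this]
    ring
  rw [hsplit, Finset.sum_insert hnotmem] at htot
  simp only [Finset.card_empty, pow_zero, sub_self, mul_zero, zero_add] at htot
  exact htot

end Acyclic


section XGside

variable {V : Type*} [Fintype V] [DecidableEq V] (G : SimpleGraph V)

noncomputable local instance : Fintype (V → V → Prop) := Fintype.ofFinite _

/-- acyclic orientations as a finset -/
noncomputable def AO : Finset (V → V → Prop) :=
  Finset.univ.filter (fun o => (∀ u w, o u w → G.Adj u w) ∧
    (∀ u w, G.Adj u w → (o u w ↔ ¬ o w u)) ∧ (∀ x, ¬ Relation.TransGen o x x))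

lemma mem_AO {o : V → V → Prop} : o ∈ AO G ↔ ((∀ u w, o u w → G.Adj u w) ∧
    (∀ u w, G.Adj u w → (o u w ↔ ¬ o w u)) ∧ (∀ x, ¬ Relation.TransGen o x x)) := by
  rw [AO, Finset.mem_filter]
  exact ⟨fun h => h.2, fun h => ⟨Finset.mem_univ _, h⟩⟩

noncomputable def sinkCount (o : V → V → Prop) : ℕ :=
  (Finset.univ.filter (fun x => ∀ u, ¬ o x u)).card

/-- proper colorings onto `k` colors -/
noncomputable def Col (k : ℕ) : Finset (V → ℕ) :=
  ((Finset.univ : Finset (V → Fin (k+1))).image (fun f v => (f v : ℕ))).filter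
    (fun c => (∀ v, c v < k) ∧ (∀ i < k, ∃ v, c v = i) ∧ (∀ u w, G.Adj u w → c u ≠ c w))

lemma mem_Col {k : ℕ} {c : V → ℕ} : c ∈ Col G k ↔
    ((∀ v, c v < k) ∧ (∀ i < k, ∃ v, c v = i) ∧ (∀ u w, G.Adj u w → c u ≠ c w)) := by
  rw [Col, Finset.mem_filter]
  constructor
  · rintro ⟨-, h⟩; exact h
  · intro h
    exact ⟨Finset.mem_image.2 ⟨fun v => ⟨c v, lt_trans (h.1 v) (Nat.lt_succ_self k)⟩,
      Finset.mem_univ _, rfl⟩, h⟩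

lemma distk_mem {k : ℕ} {c : V → ℕ} (hc : c ∈ Col G k) :
    distk k c ∈ CS (Fintype.card V) k := by
  obtain ⟨hbd, hsurj, -⟩ := (mem_Col G).1 hc
  rw [mem_CS]
  constructor
  · intro i
    obtain ⟨v, hv⟩ := hsurj i i.isLt
    simp only [distk]
    apply Finset.card_pos.2
    exact ⟨v, Finset.mem_filter.2 ⟨Finset.mem_univ _, hv⟩⟩
  · simp only [distk]
    have h1 : ∑ i : Fin k, (Finset.univ.filter (fun v => c v = (i:ℕ))).card
        = ∑ i ∈ Finset.range k, (Finset.univ.filter (fun v => c v = i)).card := by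
      rw [Finset.sum_range fun i => (Finset.univ.filter (fun v => c v = i)).card]
    rw [h1, ← Finset.card_eq_sum_card_fiberwise (f := c) (t := Finset.range k)
      (fun v _ => Finset.mem_range.2 (hbd v)), Finset.card_univ]

lemma coeff_XG_eq {k : ℕ} {g : Fin k → ℕ} (hg : g ∈ CS (Fintype.card V) k) :
    (MvPowerSeries.coeff (dg g)) (XG G)
      = (((Col G k).filter (fun c => distk k c = g)).card : ℚ) := by
  obtain ⟨hgpos, hgsum⟩ := mem_CS.1 hg
  have hXG : (MvPowerSeries.coeff (dg g)) (XG G) = ((Nat.card {c : V → ℕ //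
      (∀ u w : V, G.Adj u w → c u ≠ c w) ∧
      ∀ i : ℕ, (Finset.univ.filter fun v => c v = i).card = dg g i}) : ℚ) := rfl
  rw [hXG, ← Nat.card_eq_finsetCard]
  congr 1
  apply Nat.card_congr
  apply Equiv.subtypeEquivRight
  intro c
  rw [Finset.mem_filter, mem_Col]
  constructor
  · rintro ⟨hprop, hdist⟩
    have hbd : ∀ v, c v < k := by
      intro v
      by_contra hv
      have h0 : (Finset.univ.filter fun w => c w = c v).card = 0 := by
        rw [hdist (c v), dg_apply, dif_neg (by omega)]
      rw [Finset.card_eq_zero, Finset.filter_eq_empty_iff] at h0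
      exact h0 (Finset.mem_univ v) rfl
    refine ⟨⟨hbd, ?_, hprop⟩, ?_⟩
    · intro i hi
      have : (Finset.univ.filter fun v => c v = i).card = g ⟨i, hi⟩ := by
        rw [hdist i, dg_apply, dif_pos hi]
      have hpos := hgpos ⟨i, hi⟩
      rw [← this] at hpos
      obtain ⟨v, hv⟩ := Finset.card_pos.1 hpos
      exact ⟨v, (Finset.mem_filter.1 hv).2⟩
    · funext i
      simp only [distk]
      rw [hdist (i : ℕ), dg_apply, dif_pos i.isLt]
  · rintro ⟨⟨hbd, hsurj, hprop⟩, hdist⟩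
    refine ⟨hprop, ?_⟩
    intro i
    by_cases hi : i < k
    · rw [dg_apply, dif_pos hi]
      have := congrFun hdist ⟨i, hi⟩
      simp only [distk] at this
      exact this
    · rw [dg_apply, dif_neg hi]
      rw [Finset.card_eq_zero, Finset.filter_eq_empty_iff]
      intro v _ hv
      exact hi (hv ▸ hbd v)

lemma g_collapse (hN : 0 < Fintype.card V) (k : ℕ) (t : ℚ) :
    ∑ g ∈ CS (Fintype.card V) k, (1 - (1-t)^(dg g 0)) * (MvPowerSeries.coeff (dg g) (XG G))
      = ∑ c ∈ Col G k, (1 - (1-t)^((Finset.univ.filter (fun v => c v = 0)).card)) := by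
  rw [← Finset.sum_fiberwise_of_maps_to (fun c hc => distk_mem G hc)
    (fun c => (1 - (1-t)^((Finset.univ.filter (fun v => c v = 0)).card) : ℚ))]
  apply Finset.sum_congr rfl
  intro g hg
  rw [coeff_XG_eq G hg]
  have hw : ∀ c ∈ (Col G k).filter (fun c => distk k c = g),
      (1 - (1-t)^((Finset.univ.filter (fun v => c v = 0)).card) : ℚ)
        = (1 - (1-t)^(dg g 0)) := by
    intro c hc
    rw [Finset.mem_filter] at hc
    obtain ⟨hcol, hdist⟩ := hc
    have hbd := ((mem_Col G).1 hcol).1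
    have hk : 0 < k := by
      obtain ⟨v⟩ : Nonempty V := Fintype.card_pos_iff.1 hN
      exact lt_of_le_of_lt (Nat.zero_le _) (hbd v)
    rw [dg_apply, dif_pos hk, ← hdist]
    simp only [distk]
  rw [Finset.sum_congr rfl hw, Finset.sum_const, nsmul_eq_mul, mul_comm]

lemma orient_mem_AO {k : ℕ} {c : V → ℕ} (hc : c ∈ Col G k) :
    (fun u w => G.Adj u w ∧ c w < c u) ∈ AO G := by
  obtain ⟨-, -, hprop⟩ := (mem_Col G).1 hc
  rw [mem_AO]
  refine ⟨fun u w h => h.1, ?_, ?_⟩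
  · intro u w hAdj
    have hne := hprop u w hAdj
    constructor
    · rintro ⟨-, hlt⟩ ⟨-, hlt'⟩
      omega
    · intro h
      refine ⟨hAdj, ?_⟩
      by_contra hle
      exact h ⟨hAdj.symm, by omega⟩
  · intro x hx
    have hdec : ∀ y z, Relation.TransGen (fun u w => G.Adj u w ∧ c w < c u) y z → c z < c y := by
      intro y z h
      induction h with
      | single h => exact h.2
      | tail _ h ih => exact lt_trans h.2 ih
    have := hdec x x hx
    omega

lemma fiber_orient_eq {k : ℕ} {o : V → V → Prop} (ho : o ∈ AO G) :
    (Col G k).filter (fun c => (fun u w => G.Adj u w ∧ c w < c u) = o) = lset G o Finset.univ k := by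
  obtain ⟨hadj, hiff, hacyc⟩ := (mem_AO G).1 ho
  ext c
  rw [Finset.mem_filter, mem_Col, mem_lset]
  constructor
  · rintro ⟨⟨hbd, hsurj, hprop⟩, horient⟩
    refine ⟨fun v hv => absurd (Finset.mem_univ v) hv, fun v _ => hbd v,
      fun i hi => ?_, ?_⟩
    · obtain ⟨v, hv⟩ := hsurj i hi
      exact ⟨v, Finset.mem_univ v, hv⟩
    · intro u _ w _ hAdj
      rw [← horient]
      constructor
      · rintro ⟨-, h⟩; exact h
      · intro h; exact ⟨hAdj, h⟩
  · rintro ⟨-, hbd, hsurj, hcomp⟩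
    have hprop : ∀ u w, G.Adj u w → c u ≠ c w := by
      intro u w hAdj heq
      have h1 := hcomp u (Finset.mem_univ u) w (Finset.mem_univ w) hAdj
      have h2 := hiff u w hAdj
      rw [h2] at h1
      have h3 := hcomp w (Finset.mem_univ w) u (Finset.mem_univ u) hAdj.symm
      have h4 : ¬ o w u := by
        intro hcon
        have := h3.1 hcon
        omega
      have h5 := h1.1 h4
      omega
    refine ⟨⟨fun v => hbd v (Finset.mem_univ v), fun i hi => ?_, hprop⟩, ?_⟩
    · obtain ⟨v, -, hv⟩ := hsurj i hi
      exact ⟨v, hv⟩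
    · funext u w
      apply propext
      constructor
      · rintro ⟨hAdj, hlt⟩
        exact (hcomp u (Finset.mem_univ u) w (Finset.mem_univ w) hAdj).2 hlt
      · intro ho2
        have hAdj := hadj u w ho2
        exact ⟨hAdj, (hcomp u (Finset.mem_univ u) w (Finset.mem_univ w) hAdj).1 ho2⟩

lemma snks_univ_card (o : V → V → Prop) :
    (snks o (Finset.univ : Finset V)).card = sinkCount o := by
  rw [snks, sinkCount]
  congr 1
  apply Finset.filter_congr
  intro x _
  constructor
  · intro h u; exact h u (Finset.mem_univ u)
  · intro h u _; exact h u

theorem Phi_XG (hN : 0 < Fintype.card V) (t : ℚ) :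
    Phi (Fintype.card V) t (XG G) = ∑ o ∈ AO G, (t : ℚ) ^ (sinkCount o) := by
  unfold Phi
  have hstep : ∀ k ∈ Finset.range (Fintype.card V + 1),
      (-1:ℚ)^(Fintype.card V + k) * ∑ g ∈ CS (Fintype.card V) k,
          (1 - (1-t)^(dg g 0)) * (MvPowerSeries.coeff (dg g) (XG G))
        = ∑ o ∈ AO G, (-1:ℚ)^(Fintype.card V + k) *
            ∑ c ∈ lset G o Finset.univ k, (1 - (1-t)^((Finset.univ.filter (fun v => c v = 0)).card)) := by
    intro k _
    rw [g_collapse G hN k t]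
    rw [← Finset.sum_fiberwise_of_maps_to (fun c hc => orient_mem_AO G hc)
      (fun c => (1 - (1-t)^((Finset.univ.filter (fun v => c v = 0)).card) : ℚ))]
    rw [Finset.mul_sum]
    apply Finset.sum_congr rfl
    intro o ho
    rw [fiber_orient_eq G ho]
  rw [Finset.sum_congr rfl hstep, Finset.sum_comm]
  apply Finset.sum_congr rfl
  intro o ho
  obtain ⟨hadj, hiff, hacyc⟩ := (mem_AO G).1 ho
  have huniv : (Finset.univ : Finset V).Nonempty := by
    rw [← Finset.card_pos, Finset.card_univ]
    exact hN
  have hB := Bsum_eq G o hadj hiff hacyc Finset.univ huniv t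
  rw [Finset.card_univ] at hB
  rw [← snks_univ_card, ← hB]


lemma distk_mem_lset {o : V → V → Prop} {k : ℕ} {b : V → ℕ}
    (hb : b ∈ lset G o Finset.univ k) : distk k b ∈ CS (Fintype.card V) k := by
  obtain ⟨-, hbd, hsurj, -⟩ := (mem_lset G o).1 hb
  rw [mem_CS]
  constructor
  · intro i
    obtain ⟨v, -, hv⟩ := hsurj i i.isLt
    simp only [distk]
    apply Finset.card_pos.2
    exact ⟨v, Finset.mem_filter.2 ⟨Finset.mem_univ _, hv⟩⟩
  · simp only [distk]
    have h1 : ∑ i : Fin k, (Finset.univ.filter (fun v => b v = (i:ℕ))).card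
        = ∑ i ∈ Finset.range k, (Finset.univ.filter (fun v => b v = i)).card := by
      rw [Finset.sum_range fun i => (Finset.univ.filter (fun v => b v = i)).card]
    rw [h1, ← Finset.card_eq_sum_card_fiberwise (f := b) (t := Finset.range k)
      (fun v _ => Finset.mem_range.2 (hbd v (Finset.mem_univ v))), Finset.card_univ]

end XGside


section EpsSide

/-- 0/1 indicator finsupp of a finset -/
def indF (S : Finset ℕ) : ℕ →₀ ℕ :=
  ⟨S, fun j => if j ∈ S then 1 else 0, by intro a; simp⟩

lemma indF_apply (S : Finset ℕ) (j : ℕ) : indF S j = if j ∈ S then 1 else 0 := rfl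

lemma indF_support (S : Finset ℕ) : (indF S).support = S := rfl

variable {n : ℕ} (f : Fin n → ℕ)

/-- number of tuples of finsets with prescribed cardinalities and column counts -/
noncomputable def Mcount (d : ℕ →₀ ℕ) : ℕ :=
  Nat.card {T : Fin n → Finset ℕ // (∀ i, (T i).card = f i) ∧
    ∀ j : ℕ, (Finset.univ.filter (fun i => j ∈ T i)).card = d j}

lemma coeff_prod_eps (d : ℕ →₀ ℕ) :
    MvPowerSeries.coeff d (∏ i, eps (f i)) = (Mcount f d : ℚ) := by
  classical
  rw [MvPowerSeries.coeff_prod]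
  have h1 : ∀ l ∈ (Finset.univ : Finset (Fin n)).finsuppAntidiag d,
      ∏ i, MvPowerSeries.coeff (l i) (eps (f i))
        = if (∀ i : Fin n, ((l i).support.card = f i ∧ ∀ j ∈ (l i).support, l i j = 1))
            then (1:ℚ) else 0 := by
    intro l _
    have : ∀ i : Fin n, MvPowerSeries.coeff (l i) (eps (f i))
        = if ((l i).support.card = f i ∧ ∀ j ∈ (l i).support, l i j = 1) then (1:ℚ) else 0 :=
      fun i => rfl
    rw [Finset.prod_congr rfl (fun i _ => this i), Finset.prod_boole]
    congr 1
    simp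
  rw [Finset.sum_congr rfl h1, Finset.sum_boole]
  congr 1
  rw [Mcount, ← Nat.card_eq_finsetCard]
  apply Nat.card_congr
  refine ⟨?_, ?_, ?_, ?_⟩
  · rintro ⟨l, hl⟩
    refine ⟨fun i => (l i).support, ?_, ?_⟩
    · intro i
      exact ((Finset.mem_filter.1 hl).2 i).1
    · intro j
      have hmem := (Finset.mem_filter.1 hl).1
      rw [Finset.mem_finsuppAntidiag] at hmem
      have hd : d j = ∑ i : Fin n, l i j := by
        rw [← hmem.1, Finsupp.finset_sum_apply]
      have hsq := (Finset.mem_filter.1 hl).2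
      rw [hd]
      have : ∀ i : Fin n, l i j = if j ∈ (l i).support then 1 else 0 := by
        intro i
        by_cases hj : j ∈ (l i).support
        · rw [if_pos hj]; exact (hsq i).2 j hj
        · rw [if_neg hj]
          exact Finsupp.notMem_support_iff.1 hj
      rw [Finset.sum_congr rfl (fun i _ => this i), Finset.sum_boole]
      simp
  · rintro ⟨T, hT⟩
    refine ⟨Finsupp.equivFunOnFinite.symm (fun i => indF (T i)), ?_⟩
    rw [Finset.mem_filter]
    constructor
    · rw [Finset.mem_finsuppAntidiag]
      constructor
      · apply Finsupp.ext
        intro j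
        rw [Finsupp.finset_sum_apply]
        have : ∀ i : Fin n, (Finsupp.equivFunOnFinite.symm (fun i => indF (T i))) i j
            = if j ∈ T i then 1 else 0 := by
          intro i
          rfl
        rw [Finset.sum_congr rfl (fun i _ => this i), Finset.sum_boole, ← hT.2 j]
        simp
      · intro i _
        exact Finset.mem_univ i
    · intro i
      have : (Finsupp.equivFunOnFinite.symm (fun i => indF (T i))) i = indF (T i) := rfl
      rw [this, indF_support]
      refine ⟨hT.1 i, ?_⟩
      intro j hj
      rw [indF_apply, if_pos hj]
  · rintro ⟨l, hl⟩
    apply Subtype.ext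
    dsimp only
    apply Finsupp.ext
    intro i
    have h1 : (Finsupp.equivFunOnFinite.symm (fun i => indF ((l i).support))) i
        = indF ((l i).support) := rfl
    rw [h1]
    apply Finsupp.ext
    intro j
    rw [indF_apply]
    by_cases hj : j ∈ (l i).support
    · rw [if_pos hj]
      exact (((Finset.mem_filter.1 hl).2 i).2 j hj).symm
    · rw [if_neg hj]
      exact (Finsupp.notMem_support_iff.1 hj).symm
  · rintro ⟨T, hT⟩
    apply Subtype.ext
    dsimp only
    funext i
    have h1 : (Finsupp.equivFunOnFinite.symm (fun i => indF (T i))) i = indF (T i) := rfl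
    rw [h1, indF_support]


section Clique

variable {n : ℕ} (f : Fin n → ℕ)

/-- disjoint cliques graph -/
def cliqueG : SimpleGraph (Σ i : Fin n, Fin (f i)) where
  Adj a b := a.1 = b.1 ∧ a ≠ b
  symm := ⟨by rintro a b ⟨h1, h2⟩; exact ⟨h1.symm, h2.symm⟩⟩
  loopless := ⟨by rintro a ⟨-, h⟩; exact h rfl⟩

/-- canonical acyclic orientation on the cliques -/
def cliqueO : (Σ i : Fin n, Fin (f i)) → (Σ i : Fin n, Fin (f i)) → Prop :=
  fun a b => a.1 = b.1 ∧ (b.2 : ℕ) < (a.2 : ℕ)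

lemma sigma_ne {i : Fin n} {x y : Fin (f i)} (hxy : x ≠ y) :
    (⟨i, x⟩ : Σ i : Fin n, Fin (f i)) ≠ ⟨i, y⟩ := by
  intro h
  injection h with h1 h2
  exact hxy h2

lemma cliqueO_hadj : ∀ u w, cliqueO f u w → (cliqueG f).Adj u w := by
  rintro ⟨i, x⟩ ⟨j, y⟩ ⟨h1, h2⟩
  dsimp only at h1
  subst h1
  refine ⟨rfl, sigma_ne f ?_⟩
  intro he
  rw [he] at h2
  exact lt_irrefl _ h2

lemma cliqueO_hiff : ∀ u w, (cliqueG f).Adj u w → (cliqueO f u w ↔ ¬ cliqueO f w u) := by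
  rintro ⟨i, x⟩ ⟨j, y⟩ ⟨h1, hne⟩
  dsimp only at h1
  subst h1
  have hval : (x : ℕ) ≠ (y : ℕ) := by
    intro hv
    exact hne (by rw [Fin.ext hv])
  unfold cliqueO
  dsimp only
  constructor
  · rintro ⟨-, h⟩ ⟨-, h'⟩
    omega
  · intro h
    refine ⟨rfl, ?_⟩
    rcases lt_trichotomy (y : ℕ) (x : ℕ) with h1 | h1 | h1
    · exact h1
    · exact absurd h1 hval.symm
    · exact absurd ⟨rfl, h1⟩ h
  
lemma cliqueO_hacyc : ∀ a, ¬ Relation.TransGen (cliqueO f) a a := by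
  intro a ha
  have hdec : ∀ b c : (Σ i : Fin n, Fin (f i)), Relation.TransGen (cliqueO f) b c
      → (c.2 : ℕ) < (b.2 : ℕ) := by
    intro b c h
    induction h with
    | single h => exact h.2
    | tail _ h ih => exact lt_trans h.2 ih
  exact lt_irrefl _ (hdec a a ha)

lemma clique_card_univ : Fintype.card (Σ i : Fin n, Fin (f i)) = ∑ i, f i := by
  rw [Fintype.card_sigma]
  simp

lemma clique_snks_card (hf : ∀ i, 0 < f i) :
    (snks (cliqueO f) (Finset.univ : Finset (Σ i : Fin n, Fin (f i)))).card = n := by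
  have : (snks (cliqueO f) Finset.univ).card = (Finset.univ : Finset (Fin n)).card := by
    apply Finset.card_bij' (i := fun a _ => a.1) (j := fun i _ => ⟨i, ⟨0, hf i⟩⟩)
      ?hi ?hj ?li ?ri
    case hi => intro a _; exact Finset.mem_univ _
    case hj =>
      intro i _
      rw [snks, Finset.mem_filter]
      refine ⟨Finset.mem_univ _, ?_⟩
      rintro ⟨j, y⟩ - ⟨-, h2⟩
      exact absurd h2 (Nat.not_lt_zero _)
    case li =>
      intro a ha
      rw [snks, Finset.mem_filter] at ha
      obtain ⟨-, hsink⟩ := ha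
      obtain ⟨i, x⟩ := a
      dsimp only
      have hx : (x : ℕ) = 0 := by
        by_contra hx
        exact hsink ⟨i, ⟨0, hf i⟩⟩ (Finset.mem_univ _) ⟨rfl, Nat.pos_of_ne_zero hx⟩
      have hx0 : x = ⟨0, hf i⟩ := Fin.ext hx
      rw [hx0]
    case ri => intro i _; rfl
  rw [this, Finset.card_univ, Fintype.card_fin]

lemma lset_strict {k : ℕ} {b : (Σ i : Fin n, Fin (f i)) → ℕ}
    (hb : b ∈ lset (cliqueG f) (cliqueO f) Finset.univ k) (i : Fin n) :
    ∀ x y : Fin (f i), ((y : ℕ) < (x : ℕ)) ↔ b ⟨i, y⟩ < b ⟨i, x⟩ := by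
  obtain ⟨-, -, -, hcomp⟩ := (mem_lset _ _).1 hb
  intro x y
  by_cases hxy : x = y
  · subst hxy
    constructor
    · omega
    · intro h; omega
  · have hAdj : (cliqueG f).Adj ⟨i, x⟩ ⟨i, y⟩ := ⟨rfl, sigma_ne f hxy⟩
    have := hcomp ⟨i, x⟩ (Finset.mem_univ _) ⟨i, y⟩ (Finset.mem_univ _) hAdj
    rw [← this]
    unfold cliqueO
    constructor
    · intro h; exact ⟨rfl, h⟩
    · rintro ⟨-, h⟩; exact h

lemma strictMono_clique {k : ℕ} {b : (Σ i : Fin n, Fin (f i)) → ℕ}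
    (hb : b ∈ lset (cliqueG f) (cliqueO f) Finset.univ k) (i : Fin n) :
    StrictMono (fun x : Fin (f i) => b ⟨i, x⟩) := by
  intro x y hxy
  exact (lset_strict f hb i y x).1 hxy

/-- column counts of the image tuple equal color counts -/
lemma col_count_eq {k : ℕ} {b : (Σ i : Fin n, Fin (f i)) → ℕ}
    (hb : b ∈ lset (cliqueG f) (cliqueO f) Finset.univ k) (j : ℕ) :
    (Finset.univ.filter (fun i : Fin n =>
        j ∈ (Finset.univ : Finset (Fin (f i))).image (fun x => b ⟨i, x⟩))).card
      = (Finset.univ.filter (fun a : (Σ i : Fin n, Fin (f i)) => b a = j)).card := by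
  symm
  apply Finset.card_bij (i := fun a _ => a.1)
  · intro a ha
    rw [Finset.mem_filter] at ha ⊢
    refine ⟨Finset.mem_univ _, ?_⟩
    rw [Finset.mem_image]
    obtain ⟨i, x⟩ := a
    exact ⟨x, Finset.mem_univ _, ha.2⟩
  · rintro ⟨i, x⟩ ha ⟨i', y⟩ ha' h
    dsimp only at h
    subst h
    rw [Finset.mem_filter] at ha ha'
    have hinj := (strictMono_clique f hb i).injective
    have : x = y := hinj (by dsimp only; rw [ha.2, ha'.2])
    rw [this]
  · intro i hi
    rw [Finset.mem_filter, Finset.mem_image] at hi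
    obtain ⟨-, x, -, hx⟩ := hi
    exact ⟨⟨i, x⟩, Finset.mem_filter.2 ⟨Finset.mem_univ _, hx⟩, rfl⟩

lemma image_orderEmb {k : ℕ} (T : Finset ℕ) (h : T.card = k) :
    (Finset.univ : Finset (Fin k)).image (T.orderEmbOfFin h) = T := by
  apply Finset.coe_injective
  rw [Finset.coe_image, Finset.coe_univ, Set.image_univ, Finset.range_orderEmbOfFin]

lemma Mcount_fiber {k : ℕ} {g : Fin k → ℕ} (hg : g ∈ CS (∑ i, f i) k) :
    Mcount f (dg g)
      = ((lset (cliqueG f) (cliqueO f) Finset.univ k).filter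
          (fun b => distk k b = g)).card := by
  obtain ⟨hgpos, hgsum⟩ := mem_CS.1 hg
  rw [Mcount, ← Nat.card_eq_finsetCard]
  apply Nat.card_congr
  refine ⟨?_, ?_, ?_, ?_⟩
  · -- tuple to coloring
    rintro ⟨T, hT⟩
    refine ⟨fun a => (T a.1).orderEmbOfFin (hT.1 a.1) a.2, ?_⟩
    have hcol : ∀ j : ℕ, (Finset.univ.filter
        (fun a : (Σ i : Fin n, Fin (f i)) => (T a.1).orderEmbOfFin (hT.1 a.1) a.2 = j)).card
          = dg g j := by
      intro j
      rw [← hT.2 j]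
      apply Finset.card_bij (i := fun a _ => a.1)
      · intro a ha
        rw [Finset.mem_filter] at ha ⊢
        refine ⟨Finset.mem_univ _, ?_⟩
        rw [← ha.2]
        exact Finset.orderEmbOfFin_mem _ _ _
      · rintro ⟨i, x⟩ ha ⟨i', y⟩ ha' h
        dsimp only at h
        subst h
        rw [Finset.mem_filter] at ha ha'
        have : x = y := (T i).orderEmbOfFin (hT.1 i) |>.injective (by rw [ha.2, ha'.2])
        rw [this]
      · intro i hi
        rw [Finset.mem_filter] at hi
        have : j ∈ Set.range ((T i).orderEmbOfFin (hT.1 i)) := by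
          rw [Finset.range_orderEmbOfFin]
          exact_mod_cast hi.2
        obtain ⟨x, hx⟩ := this
        exact ⟨⟨i, x⟩, Finset.mem_filter.2 ⟨Finset.mem_univ _, hx⟩, rfl⟩
    have hbd : ∀ a : (Σ i : Fin n, Fin (f i)), (T a.1).orderEmbOfFin (hT.1 a.1) a.2 < k := by
      intro a
      set j := (T a.1).orderEmbOfFin (hT.1 a.1) a.2 with hj
      by_contra hjk
      have h0 : dg g j = 0 := by rw [dg_apply, dif_neg (by omega)]
      have h1 : (Finset.univ.filter (fun i : Fin n => j ∈ T i)).card = 0 := by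
        rw [hT.2 j, h0]
      rw [Finset.card_eq_zero, Finset.filter_eq_empty_iff] at h1
      exact h1 (Finset.mem_univ a.1) (hj ▸ Finset.orderEmbOfFin_mem _ _ _)
    rw [Finset.mem_filter, mem_lset]
    refine ⟨⟨fun v hv => absurd (Finset.mem_univ v) hv, fun v _ => hbd v, ?_, ?_⟩, ?_⟩
    · -- surjectivity
      intro j hj
      have hpos : 0 < dg g j := by
        rw [dg_apply, dif_pos hj]
        exact hgpos _
      rw [← hT.2 j] at hpos
      obtain ⟨i, hi⟩ := Finset.card_pos.1 hpos
      rw [Finset.mem_filter] at hi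
      have : j ∈ Set.range ((T i).orderEmbOfFin (hT.1 i)) := by
        rw [Finset.range_orderEmbOfFin]
        exact_mod_cast hi.2
      obtain ⟨x, hx⟩ := this
      exact ⟨⟨i, x⟩, Finset.mem_univ _, hx⟩
    · -- compatibility
      rintro ⟨i, x⟩ - ⟨i', y⟩ - ⟨h1, hne⟩
      dsimp only at h1
      subst h1
      have hxy : x ≠ y := by
        intro he
        exact hne (by rw [he])
      unfold cliqueO
      dsimp only
      have hmono := ((T i).orderEmbOfFin (hT.1 i)).strictMono
      constructor
      · rintro ⟨-, h⟩
        exact hmono h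
      · intro h
        exact ⟨rfl, hmono.lt_iff_lt.1 h⟩
    · -- distribution
      funext j
      simp only [distk]
      rw [hcol (j : ℕ), dg_apply, dif_pos j.isLt]
  · -- coloring to tuple
    rintro ⟨b, hb⟩
    refine ⟨fun i => (Finset.univ : Finset (Fin (f i))).image (fun x => b ⟨i, x⟩), ?_, ?_⟩
    · intro i
      have hbl := (Finset.mem_filter.1 hb).1
      rw [Finset.card_image_of_injective _ (strictMono_clique f hbl i).injective,
        Finset.card_univ, Fintype.card_fin]
    · intro j
      have hbl := (Finset.mem_filter.1 hb).1
      have hdist := (Finset.mem_filter.1 hb).2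
      rw [col_count_eq f hbl j]
      obtain ⟨-, hbd, -, -⟩ := (mem_lset _ _).1 hbl
      by_cases hj : j < k
      · have := congrFun hdist ⟨j, hj⟩
        simp only [distk] at this
        rw [dg_apply, dif_pos hj]
        exact this
      · rw [dg_apply, dif_neg hj]
        rw [Finset.card_eq_zero, Finset.filter_eq_empty_iff]
        intro a _ ha
        exact hj (ha ▸ hbd a (Finset.mem_univ a))
  · -- left inverse : tuple → coloring → tuple
    rintro ⟨T, hT⟩
    apply Subtype.ext
    dsimp only
    funext i
    exact image_orderEmb (T i) (hT.1 i)
  · -- right inverse : coloring → tuple → coloring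
    rintro ⟨b, hb⟩
    apply Subtype.ext
    dsimp only
    have hbl := (Finset.mem_filter.1 hb).1
    funext a
    obtain ⟨i, x⟩ := a
    have hmono := strictMono_clique f hbl i
    have hmem : ∀ x' : Fin (f i), (fun x'' : Fin (f i) => b ⟨i, x''⟩) x'
        ∈ (Finset.univ : Finset (Fin (f i))).image (fun x'' => b ⟨i, x''⟩) := by
      intro x'
      exact Finset.mem_image_of_mem _ (Finset.mem_univ _)
    have := Finset.orderEmbOfFin_unique
      (f := fun x'' : Fin (f i) => b ⟨i, x''⟩)
      (s := (Finset.univ : Finset (Fin (f i))).image (fun x'' => b ⟨i, x''⟩))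
      (by rw [Finset.card_image_of_injective _ hmono.injective, Finset.card_univ,
        Fintype.card_fin]) hmem hmono
    exact (congrFun this x).symm

theorem Phi_prod_eps (hf : ∀ i, 0 < f i) (hn : 0 < n) (t : ℚ) :
    Phi (∑ i, f i) t (∏ i, eps (f i)) = t ^ n := by
  classical
  set N := ∑ i, f i with hNdef
  have hNpos : 0 < N := by
    calc 0 < f ⟨0, hn⟩ := hf _
    _ ≤ ∑ i, f i := Finset.single_le_sum (fun i _ => Nat.zero_le _) (Finset.mem_univ _)
  have hcardW : Fintype.card (Σ i : Fin n, Fin (f i)) = N := clique_card_univ f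
  have hWne : Nonempty (Σ i : Fin n, Fin (f i)) := by
    rw [← Fintype.card_pos_iff, hcardW]
    exact hNpos
  unfold Phi
  have hstep : ∀ k ∈ Finset.range (N + 1),
      (-1:ℚ)^(N + k) * ∑ g ∈ CS N k,
          (1 - (1-t)^(dg g 0)) * (MvPowerSeries.coeff (dg g) (∏ i, eps (f i)))
        = (-1:ℚ)^(N + k) *
            ∑ b ∈ lset (cliqueG f) (cliqueO f) Finset.univ k,
              (1 - (1-t)^((Finset.univ.filter (fun v => b v = 0)).card)) := by
    intro k _
    congr 1
    have hCS : ∀ b ∈ lset (cliqueG f) (cliqueO f) Finset.univ k,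
        distk k b ∈ CS N k := by
      intro b hb
      have := distk_mem_lset (cliqueG f) hb
      rwa [hcardW] at this
    rw [← Finset.sum_fiberwise_of_maps_to hCS
      (fun b => (1 - (1-t)^((Finset.univ.filter (fun v => b v = 0)).card) : ℚ))]
    apply Finset.sum_congr rfl
    intro g hg
    rw [coeff_prod_eps f (dg g), Mcount_fiber f (hNdef ▸ hg)]
    have hw : ∀ b ∈ (lset (cliqueG f) (cliqueO f) Finset.univ k).filter
        (fun b => distk k b = g),
        (1 - (1-t)^((Finset.univ.filter (fun v => b v = 0)).card) : ℚ)
          = (1 - (1-t)^(dg g 0)) := by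
      intro b hbmem
      rw [Finset.mem_filter] at hbmem
      obtain ⟨hbl, hdist⟩ := hbmem
      obtain ⟨-, hbd, -, -⟩ := (mem_lset _ _).1 hbl
      have hk : 0 < k := by
        obtain ⟨a⟩ := hWne
        exact lt_of_le_of_lt (Nat.zero_le _) (hbd a (Finset.mem_univ a))
      rw [dg_apply, dif_pos hk, ← hdist]
      simp only [distk]
    rw [Finset.sum_congr rfl hw, Finset.sum_const, nsmul_eq_mul, mul_comm]
  rw [Finset.sum_congr rfl hstep]
  have huniv : (Finset.univ : Finset (Σ i : Fin n, Fin (f i))).Nonempty :=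
    Finset.univ_nonempty
  have hB := Bsum_eq (cliqueG f) (cliqueO f) (cliqueO_hadj f) (cliqueO_hiff f)
    (cliqueO_hacyc f) Finset.univ huniv t
  rw [Finset.card_univ, hcardW] at hB
  rw [hB, clique_snks_card f hf]

end Clique

end EpsSide


section Final

variable {V : Type*} [Fintype V] [DecidableEq V] (G : SimpleGraph V)

lemma epsP_eq_prod {N : ℕ} (P : Nat.Partition N) :
    epsP P = ∏ i : Fin P.parts.toList.length, eps (P.parts.toList.get i) := by
  rw [epsP]
  conv_lhs => rw [← Multiset.coe_toList P.parts]
  rw [Multiset.map_coe, Multiset.prod_coe]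
  conv_lhs => rw [← List.ofFn_get P.parts.toList]
  rw [List.map_ofFn, List.prod_ofFn]
  rfl

lemma parts_fn_sum {N : ℕ} (P : Nat.Partition N) :
    ∑ i : Fin P.parts.toList.length, P.parts.toList.get i = N := by
  have h1 : (List.ofFn P.parts.toList.get).sum = ∑ i, P.parts.toList.get i := List.sum_ofFn
  rw [List.ofFn_get] at h1
  rw [← h1, Multiset.sum_toList, P.parts_sum]

lemma parts_fn_pos {N : ℕ} (P : Nat.Partition N) (i : Fin P.parts.toList.length) :
    0 < P.parts.toList.get i :=
  P.parts_pos (Multiset.mem_toList.1 (P.parts.toList.get_mem i))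

lemma Phi_epsP {V : Type u_99} [Fintype V] [DecidableEq V] (hN : 0 < Fintype.card V) (P : Nat.Partition (Fintype.card V)) (t : ℚ) :
    Phi (Fintype.card V) t (epsP P) = t ^ P.parts.card := by
  have hn : 0 < P.parts.toList.length := by
    rw [Multiset.length_toList]
    by_contra h
    have hc : Multiset.card P.parts = 0 := by omega
    rw [Multiset.card_eq_zero] at hc
    have := P.parts_sum
    rw [hc] at this
    simp at this
    omega
  have h1 := Phi_prod_eps (f := fun i => P.parts.toList.get i) (fun i => parts_fn_pos P i) hn t
  rw [parts_fn_sum P] at h1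
  rw [epsP_eq_prod P, h1, Multiset.length_toList]

lemma key_identity (c : Nat.Partition (Fintype.card V) → ℚ)
    (hX : XG G = ∑ P : Nat.Partition (Fintype.card V), c P • epsP P)
    (hN : 0 < Fintype.card V) (t : ℚ) :
    ∑ o ∈ AO G, t ^ (sinkCount o)
      = ∑ P : Nat.Partition (Fintype.card V), c P * t ^ P.parts.card := by
  rw [← Phi_XG G hN t, hX, Phi_sum]
  apply Finset.sum_congr rfl
  intro P _
  rw [Phi_epsP (V := V) hN P t]

end Final

end Stanley12

/-- Stanley's sink theorem: for a finite graph `G` with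
`X_G = Σ_λ c_λ e_λ`, the number of acyclic orientations of `G` with exactly `j`
sinks equals `Σ_{ℓ(λ) = j} c_λ`.  An orientation is a relation `o` choosing one
direction for each edge; it is acyclic when its transitive closure is
irreflexive, and a sink is a vertex with no outgoing edge. -/
theorem stmt12 {V : Type*} [Fintype V] [DecidableEq V] (G : SimpleGraph V)
    (c : Nat.Partition (Fintype.card V) → ℚ)
    (hX : XG G = ∑ P : Nat.Partition (Fintype.card V), c P • epsP P) (j : ℕ) :
    (Nat.card {o : V → V → Prop //
        (∀ u w : V, o u w → G.Adj u w) ∧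
        (∀ u w : V, G.Adj u w → (o u w ↔ ¬ o w u)) ∧
        (∀ x : V, ¬ Relation.TransGen o x x) ∧
        Nat.card {x : V // ∀ u : V, ¬ o x u} = j} : ℚ) =
      ∑ P ∈ Finset.univ.filter
        (fun P : Nat.Partition (Fintype.card V) => P.parts.card = j), c P := by
  classical
  rcases Nat.eq_zero_or_pos (Fintype.card V) with hN0 | hNpos
  · -- empty vertex set
    haveI hVempty : IsEmpty V := Fintype.card_eq_zero_iff.1 hN0
    have hall : ∀ P : Nat.Partition (Fintype.card V), P.parts = 0 := by
      intro P
      by_contra h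
      obtain ⟨a, ha⟩ := Multiset.exists_mem_of_ne_zero h
      have h1 := P.parts_pos ha
      have h2 : a ≤ P.parts.sum := Multiset.single_le_sum (fun x _ => Nat.zero_le x) a ha
      have h3 := P.parts_sum
      omega
    have hsinks : ∀ o : V → V → Prop, Nat.card {x : V // ∀ u : V, ¬ o x u} = 0 := by
      intro o
      haveI : IsEmpty {x : V // ∀ u : V, ¬ o x u} := ⟨fun x => hVempty.false x.1⟩
      exact Nat.card_of_isEmpty
    by_cases hj : j = 0
    · subst hj
      -- LHS = 1
      have hLHS : (Nat.card {o : V → V → Prop //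
          (∀ u w : V, o u w → G.Adj u w) ∧
          (∀ u w : V, G.Adj u w → (o u w ↔ ¬ o w u)) ∧
          (∀ x : V, ¬ Relation.TransGen o x x) ∧
          Nat.card {x : V // ∀ u : V, ¬ o x u} = 0}) = 1 := by
        haveI : Unique (V → V → Prop) :=
          ⟨⟨fun _ _ => True⟩, by intro o; funext u; exact hVempty.elim u⟩
        haveI : Unique {o : V → V → Prop //
            (∀ u w : V, o u w → G.Adj u w) ∧
            (∀ u w : V, G.Adj u w → (o u w ↔ ¬ o w u)) ∧
            (∀ x : V, ¬ Relation.TransGen o x x) ∧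
            Nat.card {x : V // ∀ u : V, ¬ o x u} = 0} := by
          refine ⟨⟨default, ?_, ?_, ?_, hsinks _⟩, ?_⟩
          · intro u; exact hVempty.elim u
          · intro u; exact hVempty.elim u
          · intro x; exact hVempty.elim x
          · intro o
            apply Subtype.ext
            apply Subsingleton.elim
        rw [Nat.card_unique]
      rw [hLHS]
      -- RHS = ∑ all = 1
      have hfilter : (Finset.univ.filter
          (fun P : Nat.Partition (Fintype.card V) => P.parts.card = 0)) = Finset.univ := by
        apply Finset.filter_true_of_mem
        intro P _
        rw [hall P]
        simp
      rw [hfilter]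
      -- evaluate hX at 0
      have hco := congrArg (MvPowerSeries.coeff (0 : ℕ →₀ ℕ)) hX
      have hL1 : MvPowerSeries.coeff (0 : ℕ →₀ ℕ) (XG G) = 1 := by
        have : MvPowerSeries.coeff (0 : ℕ →₀ ℕ) (XG G) = ((Nat.card {c : V → ℕ //
            (∀ u w : V, G.Adj u w → c u ≠ c w) ∧
            ∀ i : ℕ, (Finset.univ.filter fun v => c v = i).card = (0 : ℕ →₀ ℕ) i}) : ℚ) := rfl
        rw [this]
        haveI : Unique (V → ℕ) :=
          ⟨⟨fun _ => 0⟩, by intro o; funext u; exact hVempty.elim u⟩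
        haveI : Unique {c : V → ℕ //
            (∀ u w : V, G.Adj u w → c u ≠ c w) ∧
            ∀ i : ℕ, (Finset.univ.filter fun v => c v = i).card = (0 : ℕ →₀ ℕ) i} := by
          refine ⟨⟨default, ?_, ?_⟩, ?_⟩
          · intro u; exact hVempty.elim u
          · intro i
            simp only [Finsupp.coe_zero, Pi.zero_apply]
            rw [Finset.card_eq_zero, Finset.filter_eq_empty_iff]
            intro v
            exact hVempty.elim v
          · intro o
            apply Subtype.ext
            apply Subsingleton.elim
        rw [Nat.card_unique]
        norm_num
      have hR1 : MvPowerSeries.coeff (0 : ℕ →₀ ℕ)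
          (∑ P : Nat.Partition (Fintype.card V), c P • epsP P)
            = ∑ P : Nat.Partition (Fintype.card V), c P := by
        rw [map_sum]
        apply Finset.sum_congr rfl
        intro P _
        rw [MvPowerSeries.coeff_smul]
        have : epsP P = 1 := by
          rw [epsP, hall P]
          simp
        rw [this]
        simp
      rw [hL1, hR1] at hco
      rw [← hco]
      norm_num
    · -- j ≠ 0 : both sides 0
      have hLHS : (Nat.card {o : V → V → Prop //
          (∀ u w : V, o u w → G.Adj u w) ∧
          (∀ u w : V, G.Adj u w → (o u w ↔ ¬ o w u)) ∧
          (∀ x : V, ¬ Relation.TransGen o x x) ∧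
          Nat.card {x : V // ∀ u : V, ¬ o x u} = j}) = 0 := by
        haveI : IsEmpty {o : V → V → Prop //
            (∀ u w : V, o u w → G.Adj u w) ∧
            (∀ u w : V, G.Adj u w → (o u w ↔ ¬ o w u)) ∧
            (∀ x : V, ¬ Relation.TransGen o x x) ∧
            Nat.card {x : V // ∀ u : V, ¬ o x u} = j} := by
          constructor
          rintro ⟨o, -, -, -, hcard⟩
          rw [hsinks o] at hcard
          exact hj hcard.symm
        exact Nat.card_of_isEmpty
      rw [hLHS]
      have hfilter : (Finset.univ.filter
          (fun P : Nat.Partition (Fintype.card V) => P.parts.card = j)) = ∅ := by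
        rw [Finset.filter_eq_empty_iff]
        intro P _
        rw [hall P]
        simpa using fun h => hj h.symm
      rw [hfilter]
      norm_num
  · -- main case
    have hpq : (∑ o ∈ Stanley12.AO G, (Polynomial.X : Polynomial ℚ) ^ (Stanley12.sinkCount o))
        = ∑ P : Nat.Partition (Fintype.card V),
            Polynomial.C (c P) * Polynomial.X ^ (P.parts.card) := by
      apply Polynomial.funext
      intro t
      rw [Polynomial.eval_finset_sum, Polynomial.eval_finset_sum]
      have h1 : ∀ o ∈ Stanley12.AO G,
          Polynomial.eval t ((Polynomial.X : Polynomial ℚ) ^ (Stanley12.sinkCount o))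
            = t ^ (Stanley12.sinkCount o) := by
        intro o _
        simp
      have h2 : ∀ P ∈ (Finset.univ : Finset (Nat.Partition (Fintype.card V))),
          Polynomial.eval t (Polynomial.C (c P) * Polynomial.X ^ (P.parts.card))
            = c P * t ^ (P.parts.card) := by
        intro P _
        simp
      rw [Finset.sum_congr rfl h1, Finset.sum_congr rfl h2]
      exact Stanley12.key_identity G c hX hNpos t
    have hco := congrArg (fun p : Polynomial ℚ => p.coeff j) hpq
    simp only [Polynomial.finset_sum_coeff] at hco
    have hL2 : ∑ o ∈ Stanley12.AO G,
        ((Polynomial.X : Polynomial ℚ) ^ (Stanley12.sinkCount o)).coeff j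
          = (((Stanley12.AO G).filter (fun o => Stanley12.sinkCount o = j)).card : ℚ) := by
      have : ∀ o ∈ Stanley12.AO G,
          ((Polynomial.X : Polynomial ℚ) ^ (Stanley12.sinkCount o)).coeff j
            = if Stanley12.sinkCount o = j then (1:ℚ) else 0 := by
        intro o _
        rw [Polynomial.coeff_X_pow]
        congr 1
        simp [eq_comm]
      rw [Finset.sum_congr rfl this, Finset.sum_boole]
    have hR2 : ∑ P : Nat.Partition (Fintype.card V),
        (Polynomial.C (c P) * Polynomial.X ^ (P.parts.card)).coeff j
          = ∑ P ∈ Finset.univ.filter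
              (fun P : Nat.Partition (Fintype.card V) => P.parts.card = j), c P := by
      rw [Finset.sum_filter]
      apply Finset.sum_congr rfl
      intro P _
      rw [Polynomial.coeff_C_mul, Polynomial.coeff_X_pow]
      by_cases h : P.parts.card = j
      · rw [if_pos h, if_pos h.symm, mul_one]
      · rw [if_neg h, if_neg (fun hh => h hh.symm), mul_zero]
    rw [hL2, hR2] at hco
    rw [← hco]
    -- LHS cardinality identification
    congr 1
    have hsc : ∀ o : V → V → Prop, Nat.card {x : V // ∀ u : V, ¬ o x u}
        = Stanley12.sinkCount o := by
      intro o
      rw [Nat.card_eq_fintype_card, Stanley12.sinkCount, Fintype.card_subtype]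
    rw [← Nat.card_eq_finsetCard]
    apply Nat.card_congr
    apply Equiv.subtypeEquivRight
    intro o
    rw [Finset.mem_filter, Stanley12.mem_AO]
    constructor
    · rintro ⟨h1, h2, h3, h4⟩
      exact ⟨⟨h1, h2, h3⟩, by rw [← hsc o]; exact h4⟩
    · rintro ⟨⟨h1, h2, h3⟩, h4⟩
      exact ⟨h1, h2, h3, by rw [hsc o]; exact h4⟩
end

section
/- For a finite graph G on vertex set V with vertex variables, and a function α : V → ℕ, let G^α be the graph obtained by replacing each vertex v by a clique K_{α(v)}, with complete bipartite connections between cliques of adjacent vertices. Then, setting T(x,v) = Σ_λ m_λ(x) e_λ^G(v), the coefficient of v^α = ∏_v v^{α(v)} in T(x,v), multiplied by ∏_v α(v)!, equals the chromatic symmetric function X_{G^α}. -/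
open scoped Classical

/-- The `i`-th elementary `G`-symmetric polynomial (rational coefficients). -/
noncomputable def eGraph {V : Type*} [Fintype V] (G : SimpleGraph V) (i : ℕ) :
    MvPolynomial V ℚ :=
  ∑ S ∈ (Finset.univ.powersetCard i).filter
      (fun S => ∀ u ∈ S, ∀ w ∈ S, ¬ G.Adj u w),
    ∏ v ∈ S, MvPolynomial.X v

/-- The partition (multiset of nonzero exponents) of a monomial `x^d`. -/
def partOf (d : ℕ →₀ ℕ) : Multiset ℕ := d.support.val.map d

/-- `T(x, v) = Σ_λ m_λ(x) e^G_λ(v)`, as a power series in the `x`-variables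
with coefficients in the polynomial ring on the vertex variables: the
coefficient of `x^d` is `e^G_λ(v)` for `λ` the partition of the monomial `d`
(each monomial of `x` occurs in exactly one monomial symmetric function). -/
noncomputable def TGF {V : Type*} [Fintype V] (G : SimpleGraph V) :
    MvPowerSeries ℕ (MvPolynomial V ℚ) :=
  fun d => ((partOf d).map (eGraph G)).prod


section
variable {V : Type*} [Fintype V]

noncomputable def sigmaFin (S : Finset V) : V →₀ ℕ := ∑ v ∈ S, Finsupp.single v 1

omit [Fintype V] in
lemma sigmaFin_apply (S : Finset V) (w : V) : sigmaFin S w = if w ∈ S then 1 else 0 := by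
  classical
  simp [sigmaFin, Finsupp.finset_sum_apply, Finsupp.single_apply]

omit [Fintype V] in
lemma prod_monomial_one {ι : Type*} (t : Finset ι) (g : ι → (V →₀ ℕ)) :
    (∏ x ∈ t, (MvPolynomial.monomial (g x) (1:ℚ))) = MvPolynomial.monomial (∑ x ∈ t, g x) 1 := by
  classical
  induction t using Finset.induction with
  | empty => simp
  | insert _ _ h ih =>
    rw [Finset.prod_insert h, Finset.sum_insert h, ih, MvPolynomial.monomial_mul, mul_one]

omit [Fintype V] in
lemma prod_X_eq (S : Finset V) :
    (∏ v ∈ S, (MvPolynomial.X v : MvPolynomial V ℚ)) = MvPolynomial.monomial (sigmaFin S) 1 := by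
  rw [sigmaFin, ← prod_monomial_one]
  simp [MvPolynomial.X]

noncomputable def stab (G : SimpleGraph V) (k : ℕ) : Finset (Finset V) :=
  (Finset.univ.powersetCard k).filter (fun S => ∀ u ∈ S, ∀ w ∈ S, ¬ G.Adj u w)

lemma mem_stab {G : SimpleGraph V} {k : ℕ} {S : Finset V} :
    S ∈ stab G k ↔ S.card = k ∧ ∀ u ∈ S, ∀ w ∈ S, ¬ G.Adj u w := by
  rw [stab, Finset.mem_filter, Finset.mem_powersetCard_univ]

lemma eGraph_eq (G : SimpleGraph V) (k : ℕ) :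
    eGraph G k = ∑ S ∈ stab G k, MvPolynomial.monomial (sigmaFin S) (1:ℚ) := by
  unfold eGraph stab
  refine Finset.sum_congr rfl fun S _ => prod_X_eq S

lemma TGF_eq (G : SimpleGraph V) (d : ℕ →₀ ℕ) :
    TGF G d = ∏ i ∈ d.support, eGraph G (d i) := by
  show ((partOf d).map (eGraph G)).prod = (d.support.val.map fun i => eGraph G (d i)).prod
  rw [partOf, Multiset.map_map]
  rfl

noncomputable def famSet (G : SimpleGraph V) (α : V →₀ ℕ) (d : ℕ →₀ ℕ) :
    Finset (Π i ∈ d.support, Finset V) :=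
  (d.support.pi fun i => stab G (d i)).filter
    (fun p => (∑ x ∈ d.support.attach, sigmaFin (p x.1 x.2)) = α)

lemma coeff_TGF (G : SimpleGraph V) (α : V →₀ ℕ) (d : ℕ →₀ ℕ) :
    MvPolynomial.coeff α (TGF G d) = ((famSet G α d).card : ℚ) := by
  rw [TGF_eq]
  simp_rw [eGraph_eq]
  rw [Finset.prod_sum]
  unfold famSet
  rw [← Finset.sum_boole]
  rw [MvPolynomial.coeff_sum]
  refine Finset.sum_congr rfl fun p _ => ?_
  rw [prod_monomial_one, MvPolynomial.coeff_monomial]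

end

section
variable {V : Type*} [Fintype V]

def FamCond (G : SimpleGraph V) (α : V →₀ ℕ) (d : ℕ →₀ ℕ) (F : ℕ → Finset V) : Prop :=
  (∀ i, ∀ u ∈ F i, ∀ w ∈ F i, ¬ G.Adj u w) ∧ (∀ i, (F i).card = d i) ∧
    ∀ v, (d.support.filter fun i => v ∈ F i).card = α v

omit [Fintype V] in
lemma sum_sigma_apply (d : ℕ →₀ ℕ) (F : ℕ → Finset V) (v : V) :
    (∑ x ∈ d.support.attach, sigmaFin (F x.1)) v
      = (d.support.filter fun i => v ∈ F i).card := by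
  classical
  rw [Finsupp.finset_sum_apply]
  simp_rw [sigmaFin_apply]
  rw [Finset.sum_attach d.support (fun i => if v ∈ F i then 1 else 0), Finset.card_filter]

lemma mem_famSet {G : SimpleGraph V} {α : V →₀ ℕ} {d : ℕ →₀ ℕ}
    {p : Π i ∈ d.support, Finset V} :
    p ∈ famSet G α d ↔ (∀ i (h : i ∈ d.support), p i h ∈ stab G (d i)) ∧
      (∑ x ∈ d.support.attach, sigmaFin (p x.1 x.2)) = α := by
  rw [famSet, Finset.mem_filter, Finset.mem_pi]

noncomputable def famEquiv (G : SimpleGraph V) (α : V →₀ ℕ) (d : ℕ →₀ ℕ) :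
    {p // p ∈ famSet G α d} ≃ {F : ℕ → Finset V // FamCond G α d F} where
  toFun p := ⟨fun i => if h : i ∈ d.support then p.1 i h else ∅, by
    classical
    obtain ⟨hp, hsum⟩ := mem_famSet.1 p.2
    refine ⟨?_, ?_, ?_⟩
    · intro i u hu w hw
      dsimp only at hu hw
      by_cases h : i ∈ d.support
      · rw [dif_pos h] at hu hw
        exact (mem_stab.1 (hp i h)).2 u hu w hw
      · rw [dif_neg h] at hu
        simp at hu
    · intro i
      dsimp only
      by_cases h : i ∈ d.support
      · rw [dif_pos h]
        exact (mem_stab.1 (hp i h)).1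
      · rw [dif_neg h, Finset.card_empty, (Finsupp.notMem_support_iff.1 h)]
    · intro v
      have hv := DFunLike.congr_fun hsum v
      rw [show (∑ x ∈ d.support.attach, sigmaFin (p.1 x.1 x.2))
          = ∑ x ∈ d.support.attach,
              sigmaFin (if h : (x:ℕ) ∈ d.support then p.1 x.1 h else ∅) from
        Finset.sum_congr rfl fun x _ => by rw [dif_pos x.2]] at hv
      dsimp only
      rw [← sum_sigma_apply d (fun i => if h : i ∈ d.support then p.1 i h else ∅) v]
      exact hv⟩
  invFun F := ⟨fun i _ => F.1 i, by
    classical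
    obtain ⟨h1, h2, h3⟩ := F.2
    rw [mem_famSet]
    refine ⟨fun i h => mem_stab.2 ⟨h2 i, h1 i⟩, ?_⟩
    ext v
    rw [sum_sigma_apply]
    exact h3 v⟩
  left_inv p := by
    apply Subtype.ext
    funext i h
    exact dif_pos h
  right_inv F := by
    apply Subtype.ext
    funext i
    dsimp only
    by_cases h : i ∈ d.support
    · exact dif_pos h
    · rw [dif_neg h]
      refine (Finset.card_eq_zero.1 ?_).symm
      rw [F.2.2.1 i, Finsupp.notMem_support_iff.1 h]

lemma card_famSet (G : SimpleGraph V) (α : V →₀ ℕ) (d : ℕ →₀ ℕ) :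
    (famSet G α d).card = Nat.card {F : ℕ → Finset V // FamCond G α d F} := by
  rw [← Nat.card_eq_finsetCard]
  exact Nat.card_congr (famEquiv G α d)
end

/-- The clique expansion `G^α`: each vertex `v` is replaced by a clique on
`α v` vertices, with complete connections between the cliques of adjacent
vertices. -/
def cliqueExp {V : Type*} (G : SimpleGraph V) (α : V → ℕ) :
    SimpleGraph (Σ v : V, Fin (α v)) where
  Adj a b := a ≠ b ∧ (a.1 = b.1 ∨ G.Adj a.1 b.1)
  symm := by
    constructor
    rintro a b ⟨h1, h2⟩
    refine ⟨h1.symm, ?_⟩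
    rcases h2 with h | h
    · exact Or.inl h.symm
    · exact Or.inr h.symm
  loopless := by constructor; rintro a ⟨h, -⟩; exact h rfl


section
variable {V : Type*} [Fintype V] (G : SimpleGraph V) (α : V →₀ ℕ) (d : ℕ →₀ ℕ)

def ColCond (c : (Σ v : V, Fin (α v)) → ℕ) : Prop :=
  (∀ u w, (cliqueExp G fun v => α v).Adj u w → c u ≠ c w) ∧
    ∀ i : ℕ, (Finset.univ.filter fun x => c x = i).card = d i

variable {G α d}

lemma color_mem_support {c : (Σ v : V, Fin (α v)) → ℕ} (hc : ColCond G α d c)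
    (x : Σ v : V, Fin (α v)) : c x ∈ d.support := by
  rw [Finsupp.mem_support_iff, ← hc.2 (c x)]
  exact Finset.card_ne_zero_of_mem (Finset.mem_filter.2 ⟨Finset.mem_univ x, rfl⟩)

lemma clique_inj {c : (Σ v : V, Fin (α v)) → ℕ} (hc : ColCond G α d c) (v : V) :
    Function.Injective (fun j : Fin (α v) => c ⟨v, j⟩) := by
  intro j j' h
  by_contra hne
  refine hc.1 ⟨v, j⟩ ⟨v, j'⟩ ⟨?_, Or.inl rfl⟩ h
  intro hEq
  exact hne (by simpa using hEq)

variable (G α d)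

noncomputable def FmapCol (c : {c : (Σ v : V, Fin (α v)) → ℕ // ColCond G α d c}) :
    {F : ℕ → Finset V // FamCond G α d F} := by
  classical
  refine ⟨fun i => Finset.univ.filter (fun v => ∃ j : Fin (α v), c.1 ⟨v, j⟩ = i), ?_, ?_, ?_⟩
  · -- stability
    intro i u hu w hw hadj
    obtain ⟨j, hj⟩ := (Finset.mem_filter.1 hu).2
    obtain ⟨j', hj'⟩ := (Finset.mem_filter.1 hw).2
    refine c.2.1 ⟨u, j⟩ ⟨w, j'⟩ ⟨?_, Or.inr hadj⟩ (hj.trans hj'.symm)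
    intro hEq
    exact (G.ne_of_adj hadj) (congrArg Sigma.fst hEq)
  · -- card
    intro i
    rw [← c.2.2 i]
    refine (Finset.card_bij (fun x _ => x.1) ?_ ?_ ?_).symm
    · intro x hx
      exact Finset.mem_filter.2 ⟨Finset.mem_univ _, ⟨x.2, (Finset.mem_filter.1 hx).2⟩⟩
    · intro x hx y hy h1
      by_contra hne
      exact c.2.1 x y ⟨hne, Or.inl h1⟩
        (((Finset.mem_filter.1 hx).2).trans ((Finset.mem_filter.1 hy).2).symm)
    · intro v hv
      obtain ⟨j, hj⟩ := (Finset.mem_filter.1 hv).2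
      exact ⟨⟨v, j⟩, Finset.mem_filter.2 ⟨Finset.mem_univ _, hj⟩, rfl⟩
  · -- α condition
    intro v
    have himg : (d.support.filter fun i =>
        v ∈ Finset.univ.filter (fun u => ∃ j : Fin (α u), c.1 ⟨u, j⟩ = i)) =
        Finset.image (fun j : Fin (α v) => c.1 ⟨v, j⟩) Finset.univ := by
      ext i
      simp only [Finset.mem_filter, Finset.mem_image, Finset.mem_univ, true_and]
      constructor
      · rintro ⟨-, j, hj⟩
        exact ⟨j, hj⟩
      · rintro ⟨j, hj⟩
        exact ⟨hj ▸ color_mem_support c.2 ⟨v, j⟩, j, hj⟩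
    rw [himg, Finset.card_image_of_injective _ (clique_inj c.2 v), Finset.card_univ,
      Fintype.card_fin]

end

section
variable {V : Type*} [Fintype V] (G : SimpleGraph V) (α : V →₀ ℕ) (d : ℕ →₀ ℕ)

noncomputable def fibEquiv (F : {F : ℕ → Finset V // FamCond G α d F}) :
    {c : {c : (Σ v : V, Fin (α v)) → ℕ // ColCond G α d c} // FmapCol G α d c = F} ≃
      Π v : V, (Fin (α v) ≃ {i : ℕ // v ∈ F.1 i}) where
  toFun c := fun v => Equiv.ofBijective
    (fun j => ⟨c.1.1 ⟨v, j⟩, by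
      have : v ∈ (FmapCol G α d c.1).1 (c.1.1 ⟨v, j⟩) :=
        Finset.mem_filter.2 ⟨Finset.mem_univ _, ⟨j, rfl⟩⟩
      rwa [c.2] at this⟩)
    (by
      constructor
      · intro j j' h
        exact clique_inj c.1.2 v (congrArg Subtype.val h)
      · rintro ⟨i, hi⟩
        have : v ∈ (FmapCol G α d c.1).1 i := by rw [c.2]; exact hi
        obtain ⟨j, hj⟩ := (Finset.mem_filter.1 this).2
        exact ⟨j, Subtype.ext hj⟩)
  invFun e := by
    refine ⟨⟨fun x => (e x.1 x.2).1, ?_, ?_⟩, ?_⟩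
    · -- proper
      rintro a b ⟨hne, hor⟩ hEq
      rcases hor with h | h
      · obtain ⟨v, j⟩ := a
        obtain ⟨w, j'⟩ := b
        dsimp at h
        subst h
        have hj : j ≠ j' := by
          intro hjj; exact hne (by rw [hjj])
        exact hj ((e v).injective (Subtype.ext hEq))
      · have ha : a.1 ∈ F.1 ((e a.1 a.2).1) := (e a.1 a.2).2
        have hEq' : ((e a.1 a.2).1 : ℕ) = (e b.1 b.2).1 := hEq
        have hb : b.1 ∈ F.1 ((e a.1 a.2).1) := by
          rw [hEq']; exact (e b.1 b.2).2
        exact F.2.1 _ a.1 ha b.1 hb h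
    · -- sizes
      intro i
      rw [← F.2.2.1 i]
      refine Finset.card_bij (fun x _ => x.1) ?_ ?_ ?_
      · intro x hx
        have hx' := (Finset.mem_filter.1 hx).2
        exact hx' ▸ (e x.1 x.2).2
      · intro x hx y hy h1
        obtain ⟨v, j⟩ := x
        obtain ⟨w, j'⟩ := y
        dsimp at h1
        subst h1
        have : (e v j).1 = (e v j').1 :=
          ((Finset.mem_filter.1 hx).2).trans ((Finset.mem_filter.1 hy).2).symm
        rw [(e v).injective (Subtype.ext this)]
      · intro v hv
        refine ⟨⟨v, (e v).symm ⟨i, hv⟩⟩, Finset.mem_filter.2 ⟨Finset.mem_univ _, ?_⟩, rfl⟩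
        show ((e v) ((e v).symm ⟨i, hv⟩)).1 = i
        rw [Equiv.apply_symm_apply]
    · -- maps back to F
      apply Subtype.ext
      funext i
      ext v
      simp only [FmapCol, Finset.mem_filter, Finset.mem_univ, true_and]
      constructor
      · rintro ⟨j, hj⟩
        exact hj ▸ (e v j).2
      · intro hv
        refine ⟨(e v).symm ⟨i, hv⟩, ?_⟩
        show ((e v) ((e v).symm ⟨i, hv⟩)).1 = i
        rw [Equiv.apply_symm_apply]
  left_inv c := by
    apply Subtype.ext
    apply Subtype.ext
    funext x
    rfl
  right_inv e := by
    funext v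
    apply Equiv.ext
    intro j
    apply Subtype.ext
    rfl

end

section
variable {V : Type*} [Fintype V] (G : SimpleGraph V) (α : V →₀ ℕ) (d : ℕ →₀ ℕ)

lemma finite_col : Finite {c : (Σ v : V, Fin (α v)) → ℕ // ColCond G α d c} := by
  apply Finite.of_injective
    (fun c => (fun x => (⟨c.1 x, color_mem_support c.2 x⟩ : {i // i ∈ d.support})))
  intro c c' h
  apply Subtype.ext
  funext x
  exact congrArg Subtype.val (congrFun h x)

lemma finite_fam : Finite {F : ℕ → Finset V // FamCond G α d F} := by
  apply Finite.of_injective (fun F => (fun i : {i // i ∈ d.support} => F.1 i.1))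
  intro F F' h
  apply Subtype.ext
  funext i
  by_cases hi : i ∈ d.support
  · exact congrFun h ⟨i, hi⟩
  · have h1 : F.1 i = ∅ := Finset.card_eq_zero.1
      (by rw [F.2.2.1 i, Finsupp.notMem_support_iff.1 hi])
    have h2 : F'.1 i = ∅ := Finset.card_eq_zero.1
      (by rw [F'.2.2.1 i, Finsupp.notMem_support_iff.1 hi])
    rw [h1, h2]

lemma card_fiber (F : {F : ℕ → Finset V // FamCond G α d F}) :
    Nat.card {c : {c : (Σ v : V, Fin (α v)) → ℕ // ColCond G α d c} // FmapCol G α d c = F}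
      = ∏ v : V, (α v).factorial := by
  classical
  rw [Nat.card_congr (fibEquiv G α d F), Nat.card_pi]
  refine Finset.prod_congr rfl fun v _ => ?_
  letI : Fintype {i : ℕ // v ∈ F.1 i} := Fintype.ofFinset
    (d.support.filter fun i => v ∈ F.1 i)
    (by
      intro i
      rw [Finset.mem_filter]
      constructor
      · exact fun h => h.2
      · intro h
        refine ⟨Finsupp.mem_support_iff.2 ?_, h⟩
        rw [← F.2.2.1 i]
        exact Finset.card_ne_zero_of_mem h)
  have hcard : Fintype.card {i : ℕ // v ∈ F.1 i} = α v :=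
    (Fintype.card_ofFinset _ _).trans (F.2.2.2 v)
  have e2 : {i : ℕ // v ∈ F.1 i} ≃ Fin (α v) := Fintype.equivFinOfCardEq hcard
  rw [Nat.card_congr (Equiv.equivCongr (Equiv.refl (Fin (α v))) e2),
    Nat.card_eq_fintype_card, Fintype.card_equiv (Equiv.refl _), Fintype.card_fin]

lemma card_col :
    Nat.card {c : (Σ v : V, Fin (α v)) → ℕ // ColCond G α d c}
      = (∏ v : V, (α v).factorial) * Nat.card {F : ℕ → Finset V // FamCond G α d F} := by
  classical
  haveI := finite_col G α d
  haveI := finite_fam G α d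
  letI : Fintype {F : ℕ → Finset V // FamCond G α d F} := Fintype.ofFinite _
  rw [Nat.card_congr (Equiv.sigmaFiberEquiv (FmapCol G α d)).symm]
  letI : ∀ F, Fintype {c : {c : (Σ v : V, Fin (α v)) → ℕ // ColCond G α d c} //
      FmapCol G α d c = F} := fun F => Fintype.ofFinite _
  rw [Nat.card_eq_fintype_card, Fintype.card_sigma]
  simp_rw [← Nat.card_eq_fintype_card, card_fiber]
  rw [Finset.sum_const, Finset.card_univ, ← Nat.card_eq_fintype_card, smul_eq_mul, mul_comm]

end

/-- the coefficient of `v^α` in `T(x,v) = Σ_λ m_λ(x) e^G_λ(v)`,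
multiplied by `∏_v α(v)!`, is the chromatic symmetric function of the clique
expansion `G^α`. -/
theorem stmt13 {V : Type*} [Fintype V] [DecidableEq V] (G : SimpleGraph V)
    (α : V →₀ ℕ) :
    ((∏ v : V, ((α v).factorial : ℚ)) •
        (fun d => MvPolynomial.coeff α (TGF G d) : MvPowerSeries ℕ ℚ)) =
      XG (cliqueExp G fun v => α v) := by
  funext d
  show (∏ v : V, ((α v).factorial : ℚ)) * MvPolynomial.coeff α (TGF G d)
      = XG (cliqueExp G fun v => α v) d
  rw [coeff_TGF, card_famSet]
  show _ = ((Nat.card {c : (Σ v : V, Fin (α v)) → ℕ // ColCond G α d c} : ℚ))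
  rw [card_col]
  push_cast
  ring
end
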